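/- arXiv:2007.06110 — 11 statements merged into one kernel-verified Lean document; each statement's English description precedes it below -/
import Mathlib

section
/- For all a in [0,1), the quantity (1 - 1/e^{1/3})(1-a) + (1/e^{1/3})(1 - 1/e^{1/4})(1 - a^{4/3}) + (1/e^{1/3})(1/e^{1/4})(1 - 1/e^{1/2})(1 - a^{2/3}) is at least 0.637 * (1-a). -/
open Real

private lemma aux_exp_third : Real.exp (1/3) < 1.3956125 := by
  have he2 : Real.exp 1 < 2.7182818286 := Real.exp_one_lt_d9
  have hcube : Real.exp (1/3) ^ 3 = Real.exp 1 := by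
    rw [← Real.exp_nat_mul]; norm_num
  by_contra h
  push_neg at h
  have : (1.3956125:ℝ) ^ 3 ≤ Real.exp (1/3) ^ 3 :=
    pow_le_pow_left₀ (by norm_num) h 3
  rw [hcube] at this
  nlinarith

private lemma aux_exp_712 : (1.7920018:ℝ) < Real.exp (7/12) := by
  have he1 : (2.7182818283:ℝ) < Real.exp 1 := Real.exp_one_gt_d9
  have hpw : Real.exp (7/12) ^ 12 = Real.exp 1 ^ 7 := by
    rw [← Real.exp_nat_mul, ← Real.exp_nat_mul]; norm_num
  by_contra h
  push_neg at h
  have h12 : Real.exp (7/12) ^ 12 ≤ (1.7920018:ℝ) ^ 12 :=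
    pow_le_pow_left₀ (Real.exp_pos _).le h 12
  have h7 : (2.7182818283:ℝ) ^ 7 < Real.exp 1 ^ 7 := by
    apply pow_lt_pow_left₀ he1 (by norm_num)
    norm_num
  rw [hpw] at h12
  nlinarith [h12, h7]

private lemma aux_exp_1312 : (2.9545114:ℝ) < Real.exp (13/12) := by
  have he1 : (2.7182818283:ℝ) < Real.exp 1 := Real.exp_one_gt_d9
  have hpw : Real.exp (13/12) ^ 12 = Real.exp 1 ^ 13 := by
    rw [← Real.exp_nat_mul, ← Real.exp_nat_mul]; norm_num
  by_contra h
  push_neg at h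
  have h12 : Real.exp (13/12) ^ 12 ≤ (2.9545114:ℝ) ^ 12 :=
    pow_le_pow_left₀ (Real.exp_pos _).le h 12
  have h13 : (2.7182818283:ℝ) ^ 13 < Real.exp 1 ^ 13 := by
    apply pow_lt_pow_left₀ he1 (by norm_num)
    norm_num
  rw [hpw] at h12
  nlinarith [h12, h13]

theorem three_step_pointwise (a : ℝ) (ha : a ∈ Set.Ico (0:ℝ) 1) :
    (1 - 1 / exp (1/3)) * (1 - a)
      + (1 / exp (1/3)) * (1 - 1 / exp (1/4)) * (1 - a ^ ((4:ℝ)/3))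
      + (1 / exp (1/3)) * (1 / exp (1/4)) * (1 - 1 / exp (1/2)) * (1 - a ^ ((2:ℝ)/3))
      ≥ 0.637 * (1 - a) := by
  obtain ⟨ha0, ha1⟩ := ha
  set x : ℝ := a ^ ((1:ℝ)/3) with hxdef
  have hx0 : 0 ≤ x := Real.rpow_nonneg ha0 _
  have hx1 : x < 1 := by
    calc x < 1 ^ ((1:ℝ)/3) := Real.rpow_lt_rpow ha0 ha1 (by norm_num)
    _ = 1 := Real.one_rpow _
  have hax : a = x ^ 3 := by
    rw [hxdef, ← Real.rpow_natCast (a ^ ((1:ℝ)/3)) 3, ← Real.rpow_mul ha0]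
    norm_num
  have h43 : a ^ ((4:ℝ)/3) = x ^ 4 := by
    rw [hxdef, ← Real.rpow_natCast (a ^ ((1:ℝ)/3)) 4, ← Real.rpow_mul ha0]
    norm_num
  have h23 : a ^ ((2:ℝ)/3) = x ^ 2 := by
    rw [hxdef, ← Real.rpow_natCast (a ^ ((1:ℝ)/3)) 2, ← Real.rpow_mul ha0]
    norm_num
  have hE1 : Real.exp (1/3) < 1.3956125 := aux_exp_third
  have hE2 : (1.7920018:ℝ) < Real.exp (7/12) := aux_exp_712
  have hE3 : (2.9545114:ℝ) < Real.exp (13/12) := aux_exp_1312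
  have hprod1 : Real.exp (1/3) * Real.exp (1/4) = Real.exp (7/12) := by
    rw [← Real.exp_add]; norm_num
  have hprod2 : Real.exp (7/12) * Real.exp (1/2) = Real.exp (13/12) := by
    rw [← Real.exp_add]; norm_num
  have hp1 : (0:ℝ) < Real.exp (1/3) := Real.exp_pos _
  have hp2 : (0:ℝ) < Real.exp (7/12) := Real.exp_pos _
  have hp3 : (0:ℝ) < Real.exp (13/12) := Real.exp_pos _
  have hP : (0.716531:ℝ) < 1 / Real.exp (1/3) := by
    rw [lt_div_iff₀ hp1]; nlinarith
  have hR : 1 / Real.exp (7/12) < 0.5580352 := by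
    rw [div_lt_iff₀ hp2]; nlinarith
  have hS : 1 / Real.exp (13/12) < 0.3384655 := by
    rw [div_lt_iff₀ hp3]; nlinarith
  set P : ℝ := 1 / Real.exp (1/3) with hPdef
  set R : ℝ := 1 / Real.exp (7/12) with hRdef
  set S : ℝ := 1 / Real.exp (13/12) with hSdef
  have hQval : 1 / Real.exp (1/4) = R / P := by
    field_simp [hPdef, hRdef]
    rw [hPdef, hRdef, ← hprod1]; field_simp
  have hWval : 1 / Real.exp (1/2) = S / R := by
    field_simp [hRdef, hSdef]
    rw [hRdef, hSdef, ← hprod2]; field_simp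
  have hPpos : 0 < P := by positivity
  have hRpos : 0 < R := by positivity
  rw [h43, h23, hQval, hWval, hax]
  have hexpand : (1 - P) * (1 - x ^ 3) + P * (1 - R / P) * (1 - x ^ 4)
      + P * (R / P) * (1 - S / R) * (1 - x ^ 2)
      = (1 - x ^ 3) + P * (x ^ 3 - x ^ 4) + R * (x ^ 4 - x ^ 2) + S * (x ^ 2 - 1) := by
    field_simp
    ring
  rw [hexpand]
  have hx1' : 0 ≤ 1 - x := by linarith
  have k1 : (P - 0.716531) * (x ^ 3 * (1 - x)) ≥ 0 := by
    apply mul_nonneg (by linarith)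
    exact mul_nonneg (by positivity) hx1'
  have k2 : (0.5580352 - R) * (x ^ 2 * (1 - x) * (1 + x)) ≥ 0 := by
    apply mul_nonneg (by linarith)
    exact mul_nonneg (mul_nonneg (by positivity) hx1') (by linarith)
  have k3 : (0.3384655 - S) * ((1 - x) * (1 + x)) ≥ 0 := by
    apply mul_nonneg (by linarith)
    exact mul_nonneg hx1' (by linarith)
  have t1 : (1 - x) * (x - 0.752) ^ 2 * x ≥ 0 :=
    mul_nonneg (mul_nonneg hx1' (sq_nonneg _)) hx0
  have t2 : (1 - x) * (x - 0.752) ^ 2 ≥ 0 := mul_nonneg hx1' (sq_nonneg _)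
  have t3 : x * (1 - x) ≥ 0 := mul_nonneg hx0 hx1'
  linarith [k1, k2, k3, t1, t2, t3, hx1']
end

section
/- Let L(y,h,h') = e^{-h} * h' * (1 - a^{1/h'})/(1-a) for fixed a in (0,1). Then a twice-differentiable function h satisfies the Euler-Lagrange equation ∂L/∂h - d/dy (∂L/∂h') = 0 if and only if -h''(y)/(h'(y))^3 = 1/ln(a) (assuming h'(y) ≠ 0, a ≠ 1). -/
open Real

/-- The Lagrangian `L(h, h') = e^{-h} h' (1 - a^{1/h'})/(1-a)` (it does not depend on `y`
explicitly). -/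
noncomputable def lagrangianL (a : ℝ) (H P : ℝ) : ℝ :=
  exp (-H) * P * (1 - a ^ (1 / P)) / (1 - a)

lemma hasDerivAt_rpowA {a : ℝ} (ha0 : 0 < a) {P : ℝ} (hP : P ≠ 0) :
    HasDerivAt (fun Q : ℝ => a ^ (1 / Q)) (-(Real.log a) * a ^ (1 / P) / P ^ 2) P := by
  have hfun : (fun Q : ℝ => a ^ (1 / Q)) = fun Q => Real.exp (Real.log a * Q⁻¹) := by
    funext Q
    rw [Real.rpow_def_of_pos ha0, one_div]
  have h1 : HasDerivAt (fun Q : ℝ => Real.log a * Q⁻¹) (Real.log a * (-(P ^ 2)⁻¹)) P :=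
    (hasDerivAt_inv hP).const_mul (Real.log a)
  have h2 := h1.exp
  rw [hfun]
  convert h2 using 1
  rw [← Real.rpow_def_of_pos ha0, one_div]
  field_simp

lemma hasDerivAt_L_inner {a : ℝ} (ha0 : 0 < a) (H : ℝ) {P : ℝ} (hP : P ≠ 0) :
    HasDerivAt (fun Q => lagrangianL a H Q)
      (Real.exp (-H) * (1 - a ^ (1 / P) + Real.log a * a ^ (1 / P) / P) / (1 - a)) P := by
  have hA := hasDerivAt_rpowA ha0 hP
  have h1 : HasDerivAt (fun Q : ℝ => Q * (1 - a ^ (1 / Q)))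
      (1 * (1 - a ^ (1 / P)) + P * (0 - -(Real.log a) * a ^ (1 / P) / P ^ 2)) P :=
    (hasDerivAt_id P).mul ((hasDerivAt_const P 1).sub hA)
  have h2 := (h1.const_mul (Real.exp (-H))).div_const (1 - a)
  have hfun : (fun Q => lagrangianL a H Q)
      = fun Q => Real.exp (-H) * (Q * (1 - a ^ (1 / Q))) / (1 - a) := by
    funext Q; unfold lagrangianL; ring
  rw [hfun]
  convert h2 using 1
  congr 1
  congr 1
  field_simp
  ring

lemma hasDerivAt_g {a : ℝ} (ha0 : 0 < a) {Q : ℝ} (hQ : Q ≠ 0) :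
    HasDerivAt (fun Q : ℝ => 1 - a ^ (1 / Q) + Real.log a * a ^ (1 / Q) / Q)
      (-(Real.log a) ^ 2 * a ^ (1 / Q) / Q ^ 3) Q := by
  have hA := hasDerivAt_rpowA ha0 hQ
  have h1 : HasDerivAt (fun Q : ℝ => 1 - a ^ (1 / Q) + Real.log a * a ^ (1 / Q) / Q)
      (0 - -(Real.log a) * a ^ (1 / Q) / Q ^ 2
        + ((Real.log a * (-(Real.log a) * a ^ (1 / Q) / Q ^ 2)) * Q
            - Real.log a * a ^ (1 / Q) * 1) / Q ^ 2) Q :=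
    ((hasDerivAt_const Q 1).sub hA).add ((hA.const_mul (Real.log a)).div (hasDerivAt_id Q) hQ)
  convert h1 using 1
  field_simp
  ring

/-- For fixed `a ∈ (0,1)`, a twice-differentiable `h` with nonvanishing derivative satisfies
the Euler–Lagrange equation `∂L/∂h - d/dy (∂L/∂h') = 0` at `y` iff
`-h''(y)/(h'(y))^3 = 1/ln a`. -/
theorem euler_lagrange_iff (a : ℝ) (ha : a ∈ Set.Ioo (0:ℝ) 1)
    (h : ℝ → ℝ) (hh : ContDiff ℝ 2 h) (hh' : ∀ y, deriv h y ≠ 0) (y : ℝ) :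
    deriv (fun H => lagrangianL a H (deriv h y)) (h y)
        - deriv (fun t => deriv (fun P => lagrangianL a (h t) P) (deriv h t)) y = 0
      ↔ -(deriv (deriv h) y) / (deriv h y) ^ 3 = 1 / Real.log a := by
  obtain ⟨ha0, ha1⟩ := ha
  have hL : Real.log a ≠ 0 := (Real.log_neg ha0 ha1).ne
  have h1a : (1 : ℝ) - a ≠ 0 := by linarith
  set P := deriv h y with hPdef
  set P2 := deriv (deriv h) y with hP2def
  have hP : P ≠ 0 := hh' y
  have hE : Real.exp (-(h y)) ≠ 0 := Real.exp_ne_zero _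
  have hA : a ^ (1 / P) ≠ 0 := (Real.rpow_pos_of_pos ha0 _).ne'
  -- derivative in H
  have hfunH : (fun H => lagrangianL a H P)
      = fun H => Real.exp (-H) * (P * (1 - a ^ (1 / P)) / (1 - a)) := by
    funext H; unfold lagrangianL; ring
  have hH : deriv (fun H => lagrangianL a H P) (h y)
      = Real.exp (-(h y)) * -1 * (P * (1 - a ^ (1 / P)) / (1 - a)) := by
    rw [hfunH]
    exact ((((hasDerivAt_id (h y)).neg).exp).mul_const _).deriv
  -- differentiability facts
  have hdh : Differentiable ℝ h := hh.differentiable (by norm_num)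
  have hdh2 : Differentiable ℝ (deriv h) := by
    have h2 : ContDiff ℝ (1 + 1) h := by
      convert hh using 2
      norm_num
    exact (contDiff_succ_iff_deriv.mp h2).2.2.differentiable (by norm_num)
  have hhy : HasDerivAt h P y := (hdh y).hasDerivAt
  have hh2y : HasDerivAt (deriv h) P2 y := (hdh2 y).hasDerivAt
  -- rewrite the inner deriv function
  have hfunt : (fun t => deriv (fun P => lagrangianL a (h t) P) (deriv h t))
      = fun t => Real.exp (-(h t)) *
          (1 - a ^ (1 / deriv h t)
            + Real.log a * a ^ (1 / deriv h t) / deriv h t) / (1 - a) := by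
    funext t
    rw [(hasDerivAt_L_inner ha0 (h t) (hh' t)).deriv]
  -- derivative of the outer function
  have hgcomp : HasDerivAt (fun t => 1 - a ^ (1 / deriv h t)
        + Real.log a * a ^ (1 / deriv h t) / deriv h t)
      ((-(Real.log a) ^ 2 * a ^ (1 / P) / P ^ 3) * P2) y := by
    have := (hasDerivAt_g ha0 hP).comp y hh2y
    simpa [Function.comp_def] using this
  have hF : deriv (fun t => deriv (fun P => lagrangianL a (h t) P) (deriv h t)) y
      = (Real.exp (-(h y)) * -P *
          (1 - a ^ (1 / P) + Real.log a * a ^ (1 / P) / P)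
        + Real.exp (-(h y)) * ((-(Real.log a) ^ 2 * a ^ (1 / P) / P ^ 3) * P2)) / (1 - a) := by
    rw [hfunt]
    exact (((hhy.neg.exp).mul hgcomp).div_const (1 - a)).deriv
  rw [hH, hF]
  -- now pure algebra
  have key : Real.exp (-(h y)) * -1 * (P * (1 - a ^ (1 / P)) / (1 - a))
      - (Real.exp (-(h y)) * -P *
          (1 - a ^ (1 / P) + Real.log a * a ^ (1 / P) / P)
        + Real.exp (-(h y)) * ((-(Real.log a) ^ 2 * a ^ (1 / P) / P ^ 3) * P2)) / (1 - a)
      = Real.exp (-(h y)) * a ^ (1 / P) * Real.log a * (P ^ 3 + Real.log a * P2)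
          / ((1 - a) * P ^ 3) := by
    field_simp
    ring
  rw [key]
  have hP3 : P ^ 3 ≠ 0 := pow_ne_zero 3 hP
  rw [div_eq_zero_iff]
  rw [div_eq_div_iff hP3 hL]
  constructor
  · rintro (hc | hc)
    · have : P ^ 3 + Real.log a * P2 = 0 := by
        rcases mul_eq_zero.mp hc with hc | hc
        · rcases mul_eq_zero.mp hc with hc | hc
          · rcases mul_eq_zero.mp hc with hc | hc
            · exact absurd hc hE
            · exact absurd hc hA
          · exact absurd hc hL
        · exact hc
      linarith
    · exact absurd hc (mul_ne_zero h1a hP3)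
  · intro hc
    left
    have : P ^ 3 + Real.log a * P2 = 0 := by linarith
    rw [this, mul_zero]
end

section
/- There exists a unique μ̄ > 0 such that 1 - e^{√μ̄}/√μ̄ + e^{μ̄/2}/√μ̄ = 0, and μ̄ ≈ 1.9202 (i.e., μ̄ ∈ (1.92, 1.93)). -/
open Real

lemma lt_exp_self' (t : ℝ) : t < Real.exp t := by
  have := Real.add_one_le_exp t; linarith

lemma exp_sub_self_pos (t : ℝ) : 0 < Real.exp t - t := by linarith [lt_exp_self' t]

noncomputable def nfun (t : ℝ) : ℝ := Real.exp t - 1 - t * Real.exp t + t ^ 2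

lemma nfun_hasDeriv (t : ℝ) : HasDerivAt nfun (t * (2 - Real.exp t)) t := by
  have h : HasDerivAt (fun t : ℝ => Real.exp t - 1 - t * Real.exp t + t ^ 2)
      (Real.exp t - (1 * Real.exp t + t * Real.exp t) + (2 : ℕ) * t ^ 1) t := by
    exact (((Real.hasDerivAt_exp t).sub_const 1).sub
      ((hasDerivAt_id t).mul (Real.hasDerivAt_exp t))).add (hasDerivAt_pow 2 t)
  show HasDerivAt (fun t : ℝ => Real.exp t - 1 - t * Real.exp t + t ^ 2) _ t
  convert h using 1
  push_cast
  ring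

lemma nfun_cont : Continuous nfun := by
  unfold nfun; fun_prop

lemma nfun_strictMonoOn : StrictMonoOn nfun (Set.Icc 0 (Real.log 2)) := by
  apply strictMonoOn_of_deriv_pos (convex_Icc _ _) nfun_cont.continuousOn
  intro t ht
  rw [interior_Icc] at ht
  rw [(nfun_hasDeriv t).deriv]
  have h2 : Real.exp t < 2 := by
    have := Real.exp_lt_exp.mpr ht.2
    rwa [Real.exp_log (by norm_num : (0:ℝ) < 2)] at this
  nlinarith [ht.1]

lemma nfun_strictAntiOn : StrictAntiOn nfun (Set.Ici (Real.log 2)) := by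
  apply strictAntiOn_of_deriv_neg (convex_Ici _) nfun_cont.continuousOn
  intro t ht
  rw [interior_Ici] at ht
  rw [(nfun_hasDeriv t).deriv]
  have h2 : 2 < Real.exp t := by
    have := Real.exp_lt_exp.mpr ht
    rwa [Real.exp_log (by norm_num : (0:ℝ) < 2)] at this
  have h0 : 0 < t := lt_trans (Real.log_pos (by norm_num)) ht
  nlinarith

lemma nfun_zero : nfun 0 = 0 := by simp [nfun]

lemma nfun_one : nfun 1 = 0 := by simp [nfun]

lemma log_two_lt_one : Real.log 2 < 1 := by
  linarith [Real.log_two_lt_d9]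

lemma nfun_pos {t : ℝ} (h0 : 0 < t) (h1 : t < 1) : 0 < nfun t := by
  rcases le_or_gt t (Real.log 2) with h | h
  · have := nfun_strictMonoOn ⟨le_refl 0, (Real.log_pos (by norm_num)).le⟩ ⟨h0.le, h⟩ h0
    rwa [nfun_zero] at this
  · have := nfun_strictAntiOn (Set.mem_Ici.mpr h.le) (Set.mem_Ici.mpr log_two_lt_one.le) h1
    rwa [nfun_one] at this

lemma nfun_neg {t : ℝ} (h1 : 1 < t) : nfun t < 0 := by
  have := nfun_strictAntiOn (Set.mem_Ici.mpr log_two_lt_one.le) (Set.mem_Ici.mpr (log_two_lt_one.trans h1).le) h1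
  rwa [nfun_one] at this

noncomputable def gfun (t : ℝ) : ℝ := Real.log (Real.exp t - t) - t ^ 2 / 2

lemma gfun_hasDeriv (t : ℝ) :
    HasDerivAt gfun ((Real.exp t - 1) / (Real.exp t - t) - t) t := by
  have h1 : HasDerivAt (fun t : ℝ => Real.exp t - t) (Real.exp t - 1) t := by
    exact (Real.hasDerivAt_exp t).sub (hasDerivAt_id' (x := t))
  have h2 := h1.log (ne_of_gt (exp_sub_self_pos t))
  have h3 := (hasDerivAt_pow 2 t).div_const 2
  have h := h2.sub h3
  show HasDerivAt (fun t : ℝ => Real.log (Real.exp t - t) - t ^ 2 / 2) _ t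
  refine h.congr_deriv ?_
  push_cast
  ring

lemma gfun_cont : Continuous gfun := by
  have hdiff : Differentiable ℝ gfun := fun t => (gfun_hasDeriv t).differentiableAt
  exact hdiff.continuous

lemma gfun_strictMonoOn : StrictMonoOn gfun (Set.Icc 0 1) := by
  apply strictMonoOn_of_deriv_pos (convex_Icc _ _) gfun_cont.continuousOn
  intro t ht
  rw [interior_Icc] at ht
  rw [(gfun_hasDeriv t).deriv]
  have hp := exp_sub_self_pos t
  have hn := nfun_pos ht.1 ht.2
  rw [sub_pos, lt_div_iff₀ hp]
  unfold nfun at hn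
  nlinarith

lemma gfun_strictAntiOn : StrictAntiOn gfun (Set.Ici 1) := by
  apply strictAntiOn_of_deriv_neg (convex_Ici _) gfun_cont.continuousOn
  intro t ht
  rw [interior_Ici] at ht
  rw [(gfun_hasDeriv t).deriv]
  have hp := exp_sub_self_pos t
  have hn := nfun_neg ht
  rw [sub_neg, div_lt_iff₀ hp]
  unfold nfun at hn
  nlinarith

lemma gfun_zero : gfun 0 = 0 := by simp [gfun]

lemma gfun_pos {t : ℝ} (h0 : 0 < t) (h1 : t ≤ 1) : 0 < gfun t := by
  have := gfun_strictMonoOn ⟨le_refl 0, zero_le_one⟩ ⟨h0.le, h1⟩ h0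
  rwa [gfun_zero] at this

lemma root_iff {μ : ℝ} (hμ : 0 < μ) :
    (1 - Real.exp (Real.sqrt μ) / Real.sqrt μ + Real.exp (μ / 2) / Real.sqrt μ = 0) ↔
      gfun (Real.sqrt μ) = 0 := by
  have hs : 0 < Real.sqrt μ := Real.sqrt_pos.mpr hμ
  have hsq : Real.sqrt μ ^ 2 = μ := Real.sq_sqrt hμ.le
  constructor
  · intro h
    have h2 : Real.exp (μ / 2) = Real.exp (Real.sqrt μ) - Real.sqrt μ := by
      field_simp at h
      linarith
    unfold gfun
    rw [hsq, ← h2, Real.log_exp]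
    ring
  · intro h
    unfold gfun at h
    rw [hsq] at h
    have h1 : Real.log (Real.exp (Real.sqrt μ) - Real.sqrt μ) = μ / 2 := by linarith
    have h2 : Real.exp (Real.sqrt μ) - Real.sqrt μ = Real.exp (μ / 2) := by
      rw [← h1, Real.exp_log (exp_sub_self_pos _)]
    field_simp
    linarith

lemma exp_96_ub : Real.exp 0.96 ≤ 2.6116966 := by
  have h := Real.exp_bound' (by norm_num : (0:ℝ) ≤ 0.96) (by norm_num : (0.96:ℝ) ≤ 1)
    (by norm_num : 0 < 10)
  refine h.trans ?_
  norm_num [Finset.sum_range_succ, Nat.factorial]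

lemma exp_138564_lb : (3.9973834 : ℝ) ≤ Real.exp 1.38564 := by
  refine le_trans ?_ (Real.sum_le_exp_of_nonneg (by norm_num : (0:ℝ) ≤ 1.38564) 14)
  norm_num [Finset.sum_range_succ, Nat.factorial]

lemma exp_6946225_ub : Real.exp 0.6946225 ≤ 2.002953 := by
  have h := Real.exp_bound' (by norm_num : (0:ℝ) ≤ 0.6946225) (by norm_num : (0.6946225:ℝ) ≤ 1)
    (by norm_num : 0 < 12)
  refine h.trans ?_
  norm_num [Finset.sum_range_succ, Nat.factorial]

lemma exp_965_lb : (2.6247 : ℝ) ≤ Real.exp 0.965 := by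
  refine le_trans ?_ (Real.sum_le_exp_of_nonneg (by norm_num : (0:ℝ) ≤ 0.965) 12)
  norm_num [Finset.sum_range_succ, Nat.factorial]

lemma gA : 0 < gfun (Real.sqrt 1.92) := by
  have hlb : (1.38564 : ℝ) ≤ Real.sqrt 1.92 :=
    (Real.le_sqrt (by norm_num) (by norm_num)).mpr (by norm_num)
  have hub : Real.sqrt 1.92 ≤ 1.385641 :=
    (Real.sqrt_le_left (by norm_num)).mpr (by norm_num)
  have hs2 : Real.sqrt 1.92 ^ 2 = 1.92 := Real.sq_sqrt (by norm_num)
  have hpos := exp_sub_self_pos (Real.sqrt 1.92)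
  have hkey : Real.exp 0.96 < Real.exp (Real.sqrt 1.92) - Real.sqrt 1.92 := by
    have h1 : Real.exp 1.38564 ≤ Real.exp (Real.sqrt 1.92) := Real.exp_le_exp.mpr hlb
    have h2 := exp_138564_lb
    have h3 := exp_96_ub
    nlinarith
  have hlog := (Real.lt_log_iff_exp_lt hpos).mpr hkey
  unfold gfun
  rw [hs2]
  linarith

lemma gB : gfun (Real.sqrt 1.93) < 0 := by
  have hlb : (1.389244 : ℝ) ≤ Real.sqrt 1.93 :=
    (Real.le_sqrt (by norm_num) (by norm_num)).mpr (by norm_num)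
  have hub : Real.sqrt 1.93 ≤ 1.389245 :=
    (Real.sqrt_le_left (by norm_num)).mpr (by norm_num)
  have hs2 : Real.sqrt 1.93 ^ 2 = 1.93 := Real.sq_sqrt (by norm_num)
  have hpos := exp_sub_self_pos (Real.sqrt 1.93)
  have hexpub : Real.exp (Real.sqrt 1.93) ≤ 2.002953 * 2.002953 := by
    have h1 : Real.exp (Real.sqrt 1.93) ≤ Real.exp 1.389245 := Real.exp_le_exp.mpr hub
    have h2 : Real.exp (1.389245 : ℝ) = Real.exp 0.6946225 * Real.exp 0.6946225 := by
      rw [← Real.exp_add]; norm_num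
    have h3 := exp_6946225_ub
    have h4 : (0:ℝ) ≤ Real.exp 0.6946225 := (Real.exp_pos _).le
    nlinarith
  have hkey : Real.exp (Real.sqrt 1.93) - Real.sqrt 1.93 < Real.exp 0.965 := by
    have := exp_965_lb
    nlinarith
  have hlog := (Real.log_lt_iff_lt_exp hpos).mpr hkey
  unfold gfun
  rw [hs2]
  linarith

theorem mu_bar_exists_unique :
    ∃ μ : ℝ, (0 < μ ∧ 1 - exp (Real.sqrt μ) / Real.sqrt μ + exp (μ / 2) / Real.sqrt μ = 0) ∧
      (∀ μ' : ℝ, 0 < μ' →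
        1 - exp (Real.sqrt μ') / Real.sqrt μ' + exp (μ' / 2) / Real.sqrt μ' = 0 → μ' = μ) ∧
      μ ∈ Set.Ioo (1.92 : ℝ) 1.93 := by
  have cont : ContinuousOn (fun μ : ℝ => gfun (Real.sqrt μ)) (Set.Icc 1.92 1.93) :=
    (gfun_cont.comp Real.continuous_sqrt).continuousOn
  have hmem : (0 : ℝ) ∈ Set.Ioo ((fun μ : ℝ => gfun (Real.sqrt μ)) 1.93)
      ((fun μ : ℝ => gfun (Real.sqrt μ)) 1.92) := ⟨gB, gA⟩
  obtain ⟨μ, hμmem, hμ0⟩ :=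
    intermediate_value_Ioo' (by norm_num : (1.92 : ℝ) ≤ 1.93) cont hmem
  have hμpos : 0 < μ := by have := hμmem.1; norm_num at this ⊢; linarith
  have hμroot : gfun (Real.sqrt μ) = 0 := hμ0
  have hsqone : 1 < Real.sqrt μ := by
    have : (1:ℝ) ≤ Real.sqrt μ := (Real.le_sqrt (by norm_num) hμpos.le).mpr
      (by have := hμmem.1; norm_num at this ⊢; linarith)
    rcases lt_or_eq_of_le this with h | h
    · exact h
    · exfalso
      have := gfun_pos (by linarith : (0:ℝ) < Real.sqrt μ) (le_of_eq h.symm)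
      rw [hμroot] at this; exact lt_irrefl 0 this
  refine ⟨μ, ⟨hμpos, (root_iff hμpos).mpr hμroot⟩, ?_, hμmem⟩
  intro μ' hμ' heq'
  have h' : gfun (Real.sqrt μ') = 0 := (root_iff hμ').mp heq'
  have hs' : 0 < Real.sqrt μ' := Real.sqrt_pos.mpr hμ'
  have h1' : 1 ≤ Real.sqrt μ' := by
    by_contra h
    push_neg at h
    have := gfun_pos hs' h.le
    rw [h'] at this; exact lt_irrefl 0 this
  have hinj := gfun_strictAntiOn.injOn (Set.mem_Ici.mpr h1') (Set.mem_Ici.mpr hsqone.le)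
    (h'.trans hμroot.symm)
  have := congrArg (fun x : ℝ => x ^ 2) hinj
  simpa [Real.sq_sqrt hμ'.le, Real.sq_sqrt hμpos.le] using this
end

section
/- Let μ̄ be the unique positive root of 1 - e^{√μ}/√μ + e^{μ/2}/√μ = 0. Then the value α = e^{-√μ̄}(1 - e^{√μ̄} + √μ̄)/(e^{-μ̄/2} - 1) satisfies 0.653 < α < 0.654. -/
open Real

private lemma sum9_eq (x : ℝ) :
    ∑ i ∈ Finset.range 9, x ^ i / i.factorial =
      1 + x + x^2/2 + x^3/6 + x^4/24 + x^5/120 + x^6/720 + x^7/5040 + x^8/40320 := by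
  norm_num [Finset.sum_range_succ, Nat.factorial]

private lemma exp_poly_lb {x : ℝ} (h0 : 0 ≤ x) :
    1 + x + x^2/2 + x^3/6 + x^4/24 + x^5/120 + x^6/720 + x^7/5040 + x^8/40320 ≤ Real.exp x := by
  have h := Real.sum_le_exp_of_nonneg h0 9
  rwa [sum9_eq] at h

private lemma exp_poly_ub {x : ℝ} (h0 : 0 ≤ x) (h1 : x ≤ 1) :
    Real.exp x ≤ 1 + x + x^2/2 + x^3/6 + x^4/24 + x^5/120 + x^6/720 + x^7/5040 + x^8/40320
      + x^9 * (10/3265920) := by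
  have h := Real.exp_bound (x := x) (by rwa [abs_of_nonneg h0]) (n := 9) (by norm_num)
  rw [abs_of_nonneg h0, sum9_eq] at h
  have h2 := (abs_le.mp h).2
  have h3 : x ^ 9 * (((9:ℕ).succ : ℝ) / ((9:ℕ).factorial * (9:ℕ))) = x ^ 9 * (10/3265920) := by
    norm_num [Nat.factorial]
  linarith [h3 ▸ h2]

noncomputable def psiA : ℝ → ℝ := fun x => Real.log (Real.exp x - x) - x^2/2

private lemma hposA (x : ℝ) : 0 < Real.exp x - x := by
  nlinarith [Real.add_one_le_exp x]

private lemma psiA_deriv (x : ℝ) :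
    HasDerivAt psiA ((Real.exp x - 1)/(Real.exp x - x) - x) x := by
  have h1 : HasDerivAt (fun y : ℝ => Real.exp y - y) (Real.exp x - 1) x :=
    (Real.hasDerivAt_exp x).sub (hasDerivAt_id x)
  have h2 := h1.log (hposA x).ne'
  have h3 : HasDerivAt (fun y : ℝ => y^2/2) x x := by
    have := (hasDerivAt_pow 2 x).div_const 2
    simpa using this
  exact h2.sub h3

private lemma psiA_cont : Continuous psiA :=
  ((Real.continuous_exp.sub continuous_id).log fun x => (hposA x).ne').sub
    ((continuous_pow 2).div_const 2)

private lemma psiA_mono : StrictMonoOn psiA (Set.Icc 0 1) := by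
  apply strictMonoOn_of_deriv_pos (convex_Icc 0 1) psiA_cont.continuousOn
  intro x hx
  rw [interior_Icc] at hx
  rw [(psiA_deriv x).deriv]
  rw [sub_pos, lt_div_iff₀ (hposA x)]
  nlinarith [Real.add_one_lt_exp (ne_of_gt hx.1), hx.1, hx.2]

private lemma psiA_anti : StrictAntiOn psiA (Set.Ici 1) := by
  apply strictAntiOn_of_deriv_neg (convex_Ici 1) psiA_cont.continuousOn
  intro x hx
  rw [interior_Ici] at hx
  rw [(psiA_deriv x).deriv]
  rw [sub_neg, div_lt_iff₀ (hposA x)]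
  have hx1 : 1 < x := hx
  nlinarith [Real.add_one_lt_exp (show x ≠ 0 by linarith), hx1]

private lemma psiA_zero : psiA 0 = 0 := by
  simp [psiA]

private lemma psiA_A_pos : 0 < psiA 1.3845 := by
  have e1 : (1.998206:ℝ) ≤ Real.exp 0.69225 :=
    le_trans (by norm_num) (exp_poly_lb (by norm_num))
  have e2 : Real.exp 1.3845 = Real.exp 0.69225 ^ 2 := by
    rw [sq, ← Real.exp_add]; norm_num
  have e3 : Real.exp 0.958420125 ≤ 2.6075736 :=
    le_trans (exp_poly_ub (by norm_num) (by norm_num)) (by norm_num)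
  have hlt : Real.exp (1.3845^2/2) < Real.exp 1.3845 - 1.3845 := by
    have h2 : (1.3845:ℝ)^2/2 = 0.958420125 := by norm_num
    rw [h2, e2]
    nlinarith [e1, e3, Real.exp_pos 0.69225]
  have hp : (0:ℝ) < Real.exp 1.3845 - 1.3845 := lt_trans (Real.exp_pos _) hlt
  have h4 := (Real.lt_log_iff_exp_lt hp).mpr hlt
  simp only [psiA]
  linarith

private lemma psiA_B_neg : psiA 1.387 < 0 := by
  have e1 : Real.exp 0.6935 ≤ 2.0007058 :=
    le_trans (exp_poly_ub (by norm_num) (by norm_num)) (by norm_num)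
  have e2 : Real.exp 1.387 = Real.exp 0.6935 ^ 2 := by
    rw [sq, ← Real.exp_add]; norm_num
  have e3 : (2.61662:ℝ) ≤ Real.exp 0.9618845 :=
    le_trans (by norm_num) (exp_poly_lb (by norm_num))
  have hlt : Real.exp 1.387 - 1.387 < Real.exp (1.387^2/2) := by
    have h2 : (1.387:ℝ)^2/2 = 0.9618845 := by norm_num
    rw [h2, e2]
    nlinarith [e1, e3, Real.exp_pos 0.6935]
  have hp : (0:ℝ) < Real.exp 1.387 - 1.387 := hposA 1.387
  have h4 := (Real.log_lt_iff_lt_exp hp).mpr hlt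
  simp only [psiA]
  linarith

theorem alpha_bounds (μ : ℝ) (hμ : 0 < μ)
    (hroot : 1 - exp (Real.sqrt μ) / Real.sqrt μ + exp (μ / 2) / Real.sqrt μ = 0) :
    0.653 < exp (-Real.sqrt μ) * (1 - exp (Real.sqrt μ) + Real.sqrt μ) / (exp (-(μ / 2)) - 1) ∧
    exp (-Real.sqrt μ) * (1 - exp (Real.sqrt μ) + Real.sqrt μ) / (exp (-(μ / 2)) - 1) < 0.654 := by
  set s := Real.sqrt μ with hs_def
  have hs0 : 0 < s := Real.sqrt_pos.mpr hμ
  have hsq : s^2 = μ := Real.sq_sqrt hμ.le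
  have hE : Real.exp (μ/2) = Real.exp s - s := by
    field_simp at hroot
    linarith
  have hE' : Real.exp (s^2/2) = Real.exp s - s := by rw [hsq]; exact hE
  have hpsis : psiA s = 0 := by
    simp only [psiA, ← hE', Real.log_exp]
    ring
  -- s > 1
  have hs_gt1 : 1 < s := by
    by_contra h
    push_neg at h
    rcases eq_or_lt_of_le h with h1 | h1
    · have : psiA 1 > psiA 0 := psiA_mono ⟨le_refl 0, zero_le_one⟩ ⟨zero_le_one, le_refl 1⟩ one_pos
      rw [psiA_zero, ← h1, hpsis] at this
      linarith
    · have : psiA s > psiA 0 := psiA_mono ⟨le_refl 0, zero_le_one⟩ ⟨hs0.le, h1.le⟩ hs0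
      rw [psiA_zero, hpsis] at this
      linarith
  have hA : (1.3845:ℝ) < s := by
    by_contra h
    push_neg at h
    have h1 : psiA 1.3845 ≤ psiA s :=
      psiA_anti.antitoneOn (Set.mem_Ici.mpr hs_gt1.le) (by norm_num) h
    rw [hpsis] at h1
    linarith [psiA_A_pos]
  have hB : s < 1.387 := by
    by_contra h
    push_neg at h
    have h1 : psiA s ≤ psiA 1.387 :=
      psiA_anti.antitoneOn (by norm_num) (Set.mem_Ici.mpr hs_gt1.le) h
    rw [hpsis] at h1
    linarith [psiA_B_neg]
  -- simplification of the expression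
  have hes : 1 + s < Real.exp s := by
    have := Real.add_one_lt_exp hs0.ne'
    linarith
  have hEneg : Real.exp (-(μ/2)) = (Real.exp s - s)⁻¹ := by
    rw [Real.exp_neg, hE]
  have hd : Real.exp s - s ≠ 0 := (hposA s).ne'
  have hden : Real.exp (-(μ/2)) - 1 ≠ 0 := by
    rw [hEneg]
    have h1 : (Real.exp s - s)⁻¹ < 1 := by
      rw [inv_lt_one_iff₀]
      right; linarith
    linarith
  have hval : Real.exp (-s) * (1 - Real.exp s + s) / (Real.exp (-(μ/2)) - 1)
      = Real.exp (s^2/2 - s) := by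
    rw [div_eq_iff hden, Real.exp_sub, hE', hEneg, Real.exp_neg]
    field_simp
    ring
  rw [hval]
  constructor
  · have hlo : -(0.426079875:ℝ) < s^2/2 - s := by nlinarith
    have h1 : Real.exp (-(0.426079875:ℝ)) < Real.exp (s^2/2 - s) := Real.exp_lt_exp.mpr hlo
    have h2 : Real.exp 0.426079875 ≤ 1.53124308 :=
      le_trans (exp_poly_ub (by norm_num) (by norm_num)) (by norm_num)
    have h3 : Real.exp (-(0.426079875:ℝ)) = (Real.exp 0.426079875)⁻¹ := Real.exp_neg _
    have h4 := Real.exp_pos (0.426079875:ℝ)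
    have h5 : Real.exp 0.426079875 * (Real.exp 0.426079875)⁻¹ = 1 := mul_inv_cancel₀ h4.ne'
    nlinarith [h1, h2, h3, h4, h5, inv_pos.mpr h4]
  · have hhi : s^2/2 - s < -(0.4251155:ℝ) := by nlinarith
    have h1 : Real.exp (s^2/2 - s) < Real.exp (-(0.4251155:ℝ)) := Real.exp_lt_exp.mpr hhi
    have h2 : (1.529767:ℝ) ≤ Real.exp 0.4251155 :=
      le_trans (by norm_num) (exp_poly_lb (by norm_num))
    have h3 : Real.exp (-(0.4251155:ℝ)) = (Real.exp 0.4251155)⁻¹ := Real.exp_neg _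
    have h4 := Real.exp_pos (0.4251155:ℝ)
    have h5 : Real.exp 0.4251155 * (Real.exp 0.4251155)⁻¹ = 1 := mul_inv_cancel₀ h4.ne'
    nlinarith [h1, h2, h3, h4, h5, inv_pos.mpr h4]
end

section
/- For β ∈ [0, 1/(e-1)] and all a ∈ [0,1), the function J(a) = ∫_{(1+β)/e}^{1+β} a^{t-1}(t-1)/t dt satisfies J(a) ≤ 0. -/
open Real intervalIntegral

theorem J_nonpos (β : ℝ) (hβ : β ∈ Set.Icc (0:ℝ) (1 / (exp 1 - 1)))
    (a : ℝ) (ha : a ∈ Set.Ico (0:ℝ) 1) :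
    (∫ t in ((1 + β) / exp 1)..(1 + β), a ^ (t - 1) * (t - 1) / t) ≤ 0 := by
  obtain ⟨hβ0, hβ1⟩ := hβ
  obtain ⟨ha0, ha1⟩ := ha
  have he : (1:ℝ) < exp 1 := by
    have := exp_one_gt_d9; linarith
  have hd : (0:ℝ) < 1 + β := by linarith
  have hc : 0 < (1 + β) / exp 1 := by positivity
  have hcd : (1 + β) / exp 1 ≤ 1 + β := by
    rw [div_le_iff₀ (by linarith)]; nlinarith
  rcases eq_or_lt_of_le ha0 with rfl | ha0'
  · have hz : ∀ t : ℝ, (0:ℝ) ^ (t - 1) * (t - 1) / t = 0 := by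
      intro t
      rcases eq_or_ne t 1 with rfl | ht
      · simp
      · rw [Real.zero_rpow (by intro h; apply ht; linarith)]; simp
    simp only [hz, intervalIntegral.integral_const, smul_zero]
    simp [hz]
  · have hpos : ∀ t ∈ Set.uIcc ((1+β)/exp 1) (1+β), 0 < t := by
      intro t ht
      rw [Set.uIcc_of_le hcd] at ht
      linarith [ht.1]
    have hcont1 : ContinuousOn (fun t : ℝ => a ^ (t-1) * (t-1) / t)
        (Set.uIcc ((1+β)/exp 1) (1+β)) := by
      apply ContinuousOn.div
      · apply Continuous.continuousOn
        exact (continuous_const.rpow (continuous_id.sub continuous_const)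
          (fun t => Or.inl ha0'.ne')).mul (continuous_id.sub continuous_const)
      · exact continuousOn_id
      · exact fun t ht => (hpos t ht).ne'
    have hcont2 : ContinuousOn (fun t : ℝ => (t-1) / t)
        (Set.uIcc ((1+β)/exp 1) (1+β)) := by
      apply ContinuousOn.div
      · exact (continuous_id.sub continuous_const).continuousOn
      · exact continuousOn_id
      · exact fun t ht => (hpos t ht).ne'
    have hint1 : IntervalIntegrable (fun t : ℝ => a ^ (t-1) * (t-1) / t)
        MeasureTheory.volume ((1+β)/exp 1) (1+β) := hcont1.intervalIntegrable
    have hint2 : IntervalIntegrable (fun t : ℝ => (t-1) / t)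
        MeasureTheory.volume ((1+β)/exp 1) (1+β) := hcont2.intervalIntegrable
    have hle : (∫ t in ((1+β)/exp 1)..(1+β), a ^ (t-1) * (t-1) / t)
        ≤ ∫ t in ((1+β)/exp 1)..(1+β), (t-1) / t := by
      apply intervalIntegral.integral_mono_on hcd hint1 hint2
      intro t ht
      have ht0 : 0 < t := lt_of_lt_of_le hc ht.1
      rw [div_le_div_iff_of_pos_right ht0]
      rcases le_or_gt 1 t with h1 | h1
      · have : a ^ (t-1) ≤ 1 := Real.rpow_le_one ha0 ha1.le (by linarith)
        nlinarith
      · have : 1 ≤ a ^ (t-1) :=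
          Real.one_le_rpow_of_pos_of_le_one_of_nonpos ha0' ha1.le (by linarith)
        nlinarith
    have hval : (∫ t in ((1+β)/exp 1)..(1+β), (t-1) / t)
        = ((1+β) - (1+β)/exp 1) - 1 := by
      have hcongr : Set.EqOn (fun t : ℝ => (t-1)/t) (fun t : ℝ => 1 - 1/t)
          (Set.uIcc ((1+β)/exp 1) (1+β)) := by
        intro t ht
        have := (hpos t ht).ne'
        field_simp
      rw [intervalIntegral.integral_congr hcongr]
      have hne : (0:ℝ) ∉ Set.uIcc ((1+β)/exp 1) (1+β) := by
        intro h0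
        exact absurd (hpos 0 h0) (lt_irrefl 0)
      have hdiv : IntervalIntegrable (fun t : ℝ => 1/t) MeasureTheory.volume
          ((1+β)/exp 1) (1+β) := by
        apply ContinuousOn.intervalIntegrable
        exact ContinuousOn.div continuousOn_const continuousOn_id
          (fun t ht => (hpos t ht).ne')
      rw [intervalIntegral.integral_sub intervalIntegrable_const hdiv,
        integral_one_div hne]
      have : (1+β) / ((1+β)/exp 1) = exp 1 := by field_simp
      rw [this, Real.log_exp]
      simp
    rw [hval] at hle
    have h1 : β * (exp 1 - 1) ≤ 1 := by
      rw [le_div_iff₀ (by linarith : (0:ℝ) < exp 1 - 1)] at hβ1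
      exact hβ1
    have h2 : (1+β) - (1+β)/exp 1 = ((1+β) * exp 1 - (1+β)) / exp 1 := by
      field_simp
    have h3 : ((1+β) * exp 1 - (1+β)) / exp 1 ≤ 1 := by
      rw [div_le_one (by linarith : (0:ℝ) < exp 1)]
      nlinarith
    linarith
end

section
/- For β ∈ [0, 1/(e-1)] and all a ∈ [0,1), the inequality ∫_{(1+β)/e}^{1+β} (1 - a^t)/((1-a) t²) dt ≥ 1 holds. -/
open Real intervalIntegral

lemma eps_int1 (t s : ℝ) (ht : t ≠ 0) :
    ∫ ε in (0:ℝ)..s, exp (-(ε*t)) = (1 - exp (-(s*t)))/t := by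
  have h : ∀ ε ∈ Set.uIcc (0:ℝ) s,
      HasDerivAt (fun ε : ℝ => -(exp (-(ε*t))/t)) (exp (-(ε*t))) ε := by
    intro ε _
    have h1 : HasDerivAt (fun ε : ℝ => -(ε*t)) (-t) ε := by
      simpa using (show HasDerivAt (fun y : ℝ => -(id y * t)) _ ε from ((hasDerivAt_id ε).mul_const t).neg)
    have h3 := (show HasDerivAt (fun ε : ℝ => -(exp (-(ε*t))/t)) _ ε from ((h1.exp).div_const t).neg)
    convert h3 using 1
    field_simp
  have := integral_eq_sub_of_hasDerivAt h
    ((Real.continuous_exp.comp (by continuity)).intervalIntegrable 0 s)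
  rw [this]
  simp [Real.exp_zero]
  field_simp
  ring

lemma eps_int2 (t s : ℝ) :
    ∫ ε in (0:ℝ)..s, exp (-ε) * (1 - ε*(t-1))
      = (1 - exp (-s)) - (t-1)*(1-(1+s)*exp (-s)) := by
  have h : ∀ ε ∈ Set.uIcc (0:ℝ) s,
      HasDerivAt (fun ε : ℝ => (-1 + (t-1)*(1+ε)) * exp (-ε))
        (exp (-ε) * (1 - ε*(t-1))) ε := by
    intro ε _
    have hA : HasDerivAt (fun ε : ℝ => -1 + (t-1)*(1+ε)) (t-1) ε := by
      simpa using (((hasDerivAt_id ε).const_add 1).const_mul (t-1)).const_add (-1)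
    have hB : HasDerivAt (fun ε : ℝ => exp (-ε)) (-exp (-ε)) ε := by
      simpa using ((hasDerivAt_id ε).neg).exp
    convert (show HasDerivAt (fun ε : ℝ => (-1 + (t-1)*(1+ε)) * exp (-ε)) _ ε from hA.mul hB) using 1
    ring
  have hint : IntervalIntegrable (fun ε : ℝ => exp (-ε) * (1 - ε*(t-1)))
      MeasureTheory.volume 0 s := by
    apply Continuous.intervalIntegrable
    continuity
  rw [integral_eq_sub_of_hasDerivAt h hint]
  simp [Real.exp_zero]
  ring

lemma core_ineq (t s : ℝ) (ht : 0 < t) (hs : 0 ≤ s) :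
    ((1 - exp (-s)) - (t-1)*(1-(1+s)*exp (-s))) * t ≤ 1 - exp (-(s*t)) := by
  have key : ∫ ε in (0:ℝ)..s, exp (-ε) * (1 - ε*(t-1))
      ≤ ∫ ε in (0:ℝ)..s, exp (-(ε*t)) := by
    apply integral_mono_on hs
    · apply Continuous.intervalIntegrable; continuity
    · apply Continuous.intervalIntegrable
      exact Real.continuous_exp.comp (by continuity)
    · intro ε hε
      have h1 : -(ε*(t-1)) + 1 ≤ exp (-(ε*(t-1))) := Real.add_one_le_exp _
      have h2 : exp (-(ε*t)) = exp (-ε) * exp (-(ε*(t-1))) := by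
        rw [← Real.exp_add]; ring_nf
      rw [h2]
      have := mul_le_mul_of_nonneg_left h1 (le_of_lt (Real.exp_pos (-ε)))
      calc exp (-ε) * (1 - ε*(t-1)) = exp (-ε) * (-(ε*(t-1)) + 1) := by ring
        _ ≤ exp (-ε) * exp (-(ε*(t-1))) := this
  rw [eps_int1 t s ht.ne', eps_int2 t s] at key
  have := mul_le_mul_of_nonneg_right key ht.le
  calc ((1 - exp (-s)) - (t-1)*(1-(1+s)*exp (-s))) * t
      ≤ ((1 - exp (-(s*t)))/t) * t := this
    _ = 1 - exp (-(s*t)) := by field_simp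

theorem key_pointwise_inequality (β : ℝ) (hβ : β ∈ Set.Icc (0:ℝ) (1 / (exp 1 - 1)))
    (a : ℝ) (ha : a ∈ Set.Ico (0:ℝ) 1) :
    (∫ t in ((1 + β) / exp 1)..(1 + β), (1 - a ^ t) / ((1 - a) * t ^ 2)) ≥ 1 := by
  set E := exp 1 with hEdef
  set c := 1 + β with hcdef
  have hE9 : (2.7182818283:ℝ) < E := exp_one_gt_d9
  have hE1 : (1:ℝ) < E := by linarith
  have hE0 : (0:ℝ) < E := by linarith
  have hc1 : (1:ℝ) ≤ c := by have := hβ.1; simp [hcdef]; linarith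
  have hcpos : (0:ℝ) < c := by linarith
  have hc2 : c * (E - 1) ≤ E := by
    have hb2 : β ≤ 1 / (E - 1) := hβ.2
    have : β * (E - 1) ≤ 1 := by
      rw [← le_div_iff₀ (by linarith : (0:ℝ) < E - 1)]; exact hb2
    nlinarith
  have hle : c / E ≤ c := by
    rw [div_le_iff₀ hE0]; nlinarith
  have hcepos : (0:ℝ) < c / E := div_pos hcpos hE0
  have huIcc : Set.uIcc (c/E) c = Set.Icc (c/E) c := Set.uIcc_of_le hle
  have htpos : ∀ t ∈ Set.Icc (c/E) c, (0:ℝ) < t := fun t ht => lt_of_lt_of_le hcepos ht.1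
  have hlog : log c - log (c/E) = 1 := by
    rw [Real.log_div hcpos.ne' hE0.ne', hEdef, Real.log_exp]; ring
  rcases ha.1.lt_or_eq with h0 | h0
  · -- 0 < a < 1
    have ha1 : a < 1 := ha.2
    have h1a : (0:ℝ) < 1 - a := by linarith
    set B := 1 - a + a * log a with hBdef
    have hB : 0 ≤ B := by
      have hlog1 : log a⁻¹ ≤ a⁻¹ - 1 := Real.log_le_sub_one_of_pos (by positivity)
      rw [Real.log_inv] at hlog1
      have hai : a * a⁻¹ = 1 := mul_inv_cancel₀ h0.ne'
      nlinarith [mul_le_mul_of_nonneg_left hlog1 h0.le]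
    have hcc : c - c/E ≤ 1 := by
      rw [sub_le_iff_le_add, ← sub_le_iff_le_add']
      rw [le_div_iff₀ hE0]; nlinarith
    -- pointwise bound
    have hpt : ∀ t ∈ Set.Icc (c/E) c,
        ((1 - a + B) * t⁻¹ - B) * (1-a)⁻¹ ≤ (1 - a ^ t) / ((1 - a) * t ^ 2) := by
      intro t ht
      have ht0 : 0 < t := htpos t ht
      have hs : (0:ℝ) ≤ -log a := by
        have := Real.log_neg h0 ha1; linarith
      have key := core_ineq t (-log a) ht0 hs
      have he1 : exp (-(-log a)) = a := by rw [neg_neg]; exact Real.exp_log h0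
      have he2 : exp (-(-log a * t)) = a ^ t := by
        rw [Real.rpow_def_of_pos h0]; ring_nf
      rw [he1, he2] at key
      have hkey2 : ((1 - a) - (t-1) * B) * t ≤ 1 - a ^ t := by
        calc ((1 - a) - (t-1) * B) * t
            = ((1 - a) - (t-1)*(1-(1+(-log a))*a)) * t := by rw [hBdef]; ring
          _ ≤ 1 - a ^ t := key
      have heq : ((1 - a + B) * t⁻¹ - B) * (1-a)⁻¹
          = (((1 - a) - (t-1) * B) * t) / ((1 - a) * t ^ 2) := by
        field_simp; ring
      rw [heq]
      gcongr
    -- integrability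
    have hg_cont : ContinuousOn (fun t => (1 - a ^ t) / ((1 - a) * t ^ 2)) (Set.uIcc (c/E) c) := by
      rw [huIcc]
      apply ContinuousOn.div
      · exact continuousOn_const.sub (ContinuousOn.rpow continuousOn_const continuousOn_id
          (fun x hx => Or.inl h0.ne'))
      · exact (continuous_const.mul (continuous_pow 2)).continuousOn
      · intro x hx
        have := htpos x hx
        positivity
    have hf_cont : ContinuousOn (fun t : ℝ => ((1 - a + B) * t⁻¹ - B) * (1-a)⁻¹)
        (Set.uIcc (c/E) c) := by
      rw [huIcc]
      apply ContinuousOn.mul _ continuousOn_const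
      apply ContinuousOn.sub _ continuousOn_const
      exact continuousOn_const.mul (ContinuousOn.inv₀ continuousOn_id
        (fun x hx => (htpos x hx).ne'))
    have hmono := integral_mono_on (μ := MeasureTheory.volume) hle (hf_cont.intervalIntegrable) (hg_cont.intervalIntegrable) hpt
    -- compute lower integral
    have hderiv : ∀ x ∈ Set.uIcc (c/E) c,
        HasDerivAt (fun t : ℝ => ((1 - a + B) * log t - B * t) * (1-a)⁻¹)
          (((1 - a + B) * x⁻¹ - B) * (1-a)⁻¹) x := by
      intro x hx
      rw [huIcc] at hx
      have hx0 : (0:ℝ) < x := htpos x hx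
      have h1 := (Real.hasDerivAt_log hx0.ne').const_mul (1 - a + B)
      have h2 := (hasDerivAt_id x).const_mul B
      have h3 := (show HasDerivAt (fun t : ℝ => ((1 - a + B) * log t - B * t) * (1-a)⁻¹) _ x from (h1.sub h2).mul_const (1-a)⁻¹)
      convert h3 using 1
      ring
    have hval := integral_eq_sub_of_hasDerivAt hderiv (hf_cont.intervalIntegrable (μ := MeasureTheory.volume))
    rw [hval] at hmono
    have hlower : (1:ℝ) ≤ ((1 - a + B) * log c - B * c) * (1-a)⁻¹
        - ((1 - a + B) * log (c/E) - B * (c/E)) * (1-a)⁻¹ := by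
      have heq2 : ((1 - a + B) * log c - B * c) * (1-a)⁻¹
          - ((1 - a + B) * log (c/E) - B * (c/E)) * (1-a)⁻¹
          = ((1 - a + B) * (log c - log (c/E)) - B * (c - c/E)) * (1-a)⁻¹ := by ring
      rw [heq2, hlog]
      calc (1:ℝ) = (1-a) * (1-a)⁻¹ := (mul_inv_cancel₀ h1a.ne').symm
        _ ≤ ((1 - a + B) * 1 - B * (c - c/E)) * (1-a)⁻¹ := by
            apply mul_le_mul_of_nonneg_right _ (by positivity)
            nlinarith [mul_nonneg hB (by linarith : (0:ℝ) ≤ 1 - (c - c/E))]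
    rw [ge_iff_le]
    calc (1:ℝ) ≤ _ := hlower
      _ ≤ _ := hmono
  · -- a = 0
    subst h0
    have hEq : Set.EqOn (fun t => (1 - (0:ℝ) ^ t) / ((1 - 0) * t ^ 2))
        (fun t : ℝ => (t^2)⁻¹) (Set.uIcc (c/E) c) := by
      intro t ht
      rw [huIcc] at ht
      have ht0 := htpos t ht
      simp [Real.zero_rpow ht0.ne']
    rw [integral_congr hEq]
    have hderiv : ∀ x ∈ Set.uIcc (c/E) c,
        HasDerivAt (fun t : ℝ => -t⁻¹) ((x^2)⁻¹) x := by
      intro x hx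
      rw [huIcc] at hx
      have hx0 := htpos x hx
      simpa using (show HasDerivAt (fun t : ℝ => -t⁻¹) _ x from (hasDerivAt_inv hx0.ne').neg)
    have hcont : ContinuousOn (fun t : ℝ => (t^2)⁻¹) (Set.uIcc (c/E) c) := by
      rw [huIcc]
      exact ContinuousOn.inv₀ (continuous_pow 2).continuousOn
        (fun x hx => by have := htpos x hx; positivity)
    rw [integral_eq_sub_of_hasDerivAt hderiv hcont.intervalIntegrable]
    have hcE : c ≤ E - 1 := by nlinarith
    have hinv : (c/E)⁻¹ = E * c⁻¹ := by rw [inv_div]; ring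
    have hci : c * c⁻¹ = 1 := mul_inv_cancel₀ hcpos.ne'
    have hcinv : (0:ℝ) < c⁻¹ := by positivity
    rw [ge_iff_le, hinv]
    nlinarith
end

section
/- The function H(a) = ∫_{(1+β)/e}^{1+β} (1 - a^t)/((1-a)t²) dt is (weakly) decreasing on [0,1) for any β ∈ [0, 1/(e-1)], and lim_{a→1⁻} H(a) = 1. -/
open Real Filter intervalIntegral Set

namespace HKeyProof

noncomputable def f0 (L t : ℝ) : ℝ :=
  (Real.exp (-L) - 1 + L) * (t * (t - 1)) - 1 + Real.exp (-(L * t))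
    + t * (Real.exp L - 1) * Real.exp (-(L * t))

noncomputable def f1 (L t : ℝ) : ℝ :=
  (Real.exp (-L) - 1 + L) * (2 * t - 1)
    + Real.exp (-(L * t)) * (-L + (Real.exp L - 1) * (1 - L * t))

noncomputable def f2 (L t : ℝ) : ℝ :=
  2 * (Real.exp (-L) - 1 + L)
    + L * Real.exp (-(L * t)) * (L + (Real.exp L - 1) * (L * t - 2))

lemma hasDerivAt_E (L t : ℝ) :
    HasDerivAt (fun t : ℝ => Real.exp (-(L * t))) (Real.exp (-(L * t)) * (-L)) t := by
  have h1 : HasDerivAt (fun t : ℝ => -(L * t)) (-L) t := by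
    exact ((hasDerivAt_id t).const_mul L).neg.congr_deriv (by ring)
  exact h1.exp

lemma hasDerivAt_f0 (L t : ℝ) : HasDerivAt (f0 L) (f1 L t) t := by
  have hE := hasDerivAt_E L t
  have h1 : HasDerivAt (fun t : ℝ => t * (t - 1)) (1 * (t - 1) + t * 1) t :=
    (hasDerivAt_id t).mul ((hasDerivAt_id t).sub_const 1)
  have h2 : HasDerivAt (fun t : ℝ => (Real.exp (-L) - 1 + L) * (t * (t - 1)) - 1)
      ((Real.exp (-L) - 1 + L) * (1 * (t - 1) + t * 1)) t := (h1.const_mul _).sub_const 1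
  have h3 : HasDerivAt (fun t : ℝ => t * (Real.exp L - 1) * Real.exp (-(L * t)))
      ((1 * (Real.exp L - 1)) * Real.exp (-(L * t))
        + t * (Real.exp L - 1) * (Real.exp (-(L * t)) * (-L))) t :=
    ((hasDerivAt_id t).mul_const (Real.exp L - 1)).mul hE
  have := (h2.add hE).add h3
  refine this.congr_deriv ?_
  unfold f1
  ring

lemma hasDerivAt_f1 (L t : ℝ) : HasDerivAt (f1 L) (f2 L t) t := by
  have hE := hasDerivAt_E L t
  have h1 : HasDerivAt (fun t : ℝ => (Real.exp (-L) - 1 + L) * (2 * t - 1))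
      ((Real.exp (-L) - 1 + L) * 2) t := by
    simpa using (((hasDerivAt_id t).const_mul 2).sub_const 1).const_mul (Real.exp (-L) - 1 + L)
  have h2 : HasDerivAt (fun t : ℝ => -L + (Real.exp L - 1) * (1 - L * t))
      ((Real.exp L - 1) * (-L)) t := by
    have : HasDerivAt (fun t : ℝ => 1 - L * t) (-L) t := by
      simpa using ((hasDerivAt_id t).const_mul L).const_sub 1
    simpa using (this.const_mul (Real.exp L - 1)).const_add (-L)
  have h3 := hE.mul h2
  have := h1.add h3
  refine this.congr_deriv ?_
  unfold f2
  ring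

lemma exp_mul_exp_neg (L : ℝ) : Real.exp L * Real.exp (-L) = 1 := by
  rw [← Real.exp_add]; simp

lemma mu_pos {L : ℝ} (hL : 0 < L) : 0 < Real.exp (-L) - 1 + L := by
  have := Real.add_one_lt_exp (x := -L) (by linarith)
  linarith

lemma f0_zero (L : ℝ) : f0 L 0 = 0 := by simp [f0]

lemma f0_one (L : ℝ) : f0 L 1 = 0 := by
  have h := exp_mul_exp_neg L
  unfold f0
  simp only [mul_one]
  linear_combination h

lemma f1_one (L : ℝ) : f1 L 1 = 0 := by
  have h := exp_mul_exp_neg L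
  unfold f1
  simp only [mul_one]
  linear_combination (1 - L) * h

lemma f2_one_nonneg {L : ℝ} (hL : 0 ≤ L) : 0 ≤ f2 L 1 := by
  -- f2 L 1 = 2*exp(-L) - 2 + L^2 + 2*L*exp(-L)
  have key : ∀ x : ℝ, 0 ≤ x → 0 ≤ x ^ 2 - 2 + 2 * Real.exp (-x) + 2 * x * Real.exp (-x) := by
    intro x hx
    set φ : ℝ → ℝ := fun x => x ^ 2 - 2 + 2 * Real.exp (-x) + 2 * x * Real.exp (-x) with hφ
    have hd : ∀ y : ℝ, HasDerivAt φ (2 * y * (1 - Real.exp (-y))) y := by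
      intro y
      have hE : HasDerivAt (fun y : ℝ => Real.exp (-y)) (-Real.exp (-y)) y := by
        simpa using (hasDerivAt_neg y).exp
      have h1 : HasDerivAt (fun y : ℝ => y ^ 2 - 2) (2 * y) y := by
        simpa using (hasDerivAt_pow 2 y).sub_const 2
      have h2 := hE.const_mul (2:ℝ)
      have h3 : HasDerivAt (fun y : ℝ => 2 * y * Real.exp (-y))
          (2 * Real.exp (-y) + 2 * y * (-Real.exp (-y))) y := by
        exact (((hasDerivAt_id y).const_mul 2).mul hE).congr_deriv (by simp only [id_eq]; ring)
      have := (h1.add h2).add h3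
      refine this.congr_deriv ?_
      ring
    have hmono : MonotoneOn φ (Ici (0:ℝ)) := by
      apply monotoneOn_of_deriv_nonneg (convex_Ici 0)
      · exact fun y _ => (hd y).continuousAt.continuousWithinAt
      · exact fun y _ => (hd y).differentiableAt.differentiableWithinAt
      · intro y hy
        rw [(hd y).deriv]
        rw [interior_Ici] at hy
        have he1 : Real.exp (-y) ≤ 1 := by
          rw [Real.exp_le_one_iff]; linarith [hy.out]
        have hy0 : (0:ℝ) ≤ 2 * y := by linarith [hy.out]
        exact mul_nonneg hy0 (by linarith)
    have h0 : φ 0 = 0 := by simp [hφ]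
    have := hmono (self_mem_Ici) (mem_Ici.2 hx) hx
    rw [h0] at this
    exact this
  have h := exp_mul_exp_neg L
  have hk := key L hL
  have heq : f2 L 1 = L ^ 2 - 2 + 2 * Real.exp (-L) + 2 * L * Real.exp (-L) := by
    unfold f2
    simp only [mul_one]
    linear_combination (L * (L - 2)) * h
  rw [heq]
  exact hk

/-- Propagation lemma -/
lemma f2_prop {L : ℝ} (hL : 0 < L) {s s' : ℝ} (hs : 0 ≤ s) (hss : s ≤ s') :
    min (f2 L s) (2 * (Real.exp (-L) - 1 + L)) ≤ f2 L s' := by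
  set G : ℝ → ℝ := fun t => L * Real.exp (-(L * t)) * (L + (Real.exp L - 1) * (L * t - 2))
    with hG
  have hf2 : ∀ t, f2 L t = 2 * (Real.exp (-L) - 1 + L) + G t := fun t => rfl
  rcases le_or_gt 0 (G s') with h | h
  · rw [hf2]
    calc min (f2 L s) (2 * (Real.exp (-L) - 1 + L)) ≤ 2 * (Real.exp (-L) - 1 + L) :=
      min_le_right _ _
    _ ≤ 2 * (Real.exp (-L) - 1 + L) + G s' := by linarith
  · -- G s' < 0 implies L * s' < 2
    have hexp : 0 < L * Real.exp (-(L * s')) := mul_pos hL (Real.exp_pos _)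
    have h' : L * Real.exp (-(L * s')) * (L + (Real.exp L - 1) * (L * s' - 2)) < 0 := h
    have hbr : L + (Real.exp L - 1) * (L * s' - 2) < 0 := by
      by_contra hc
      push_neg at hc
      nlinarith [mul_nonneg hexp.le hc]
    have heL : L ≤ Real.exp L - 1 := by
      have := Real.add_one_le_exp L; linarith
    have hL2 : L * s' < 2 := by
      by_contra hc
      push_neg at hc
      nlinarith [mul_nonneg (show (0:ℝ) ≤ Real.exp L - 1 by linarith)
        (show (0:ℝ) ≤ L * s' - 2 by linarith)]
    -- G is monotone on [0, s']
    have hdG : ∀ t : ℝ, HasDerivAt G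
        (L ^ 2 * Real.exp (-(L * t)) * ((Real.exp L - 1) * (3 - L * t) - L)) t := by
      intro t
      have hE := hasDerivAt_E L t
      have h1 : HasDerivAt (fun t : ℝ => L + (Real.exp L - 1) * (L * t - 2))
          ((Real.exp L - 1) * L) t := by
        simpa using ((((hasDerivAt_id t).const_mul L).sub_const 2).const_mul
          (Real.exp L - 1)).const_add L
      have := ((hE.const_mul L).mul h1)
      refine this.congr_deriv ?_
      ring
    have hmono : MonotoneOn G (Icc 0 s') := by
      apply monotoneOn_of_deriv_nonneg (convex_Icc 0 s')
      · exact fun y _ => (hdG y).continuousAt.continuousWithinAt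
      · exact fun y _ => (hdG y).differentiableAt.differentiableWithinAt
      · intro y hy
        rw [(hdG y).deriv]
        rw [interior_Icc] at hy
        have hy2 : L * y < 2 := by
          have : L * y ≤ L * s' := by
            apply mul_le_mul_of_nonneg_left hy.2.le hL.le
          linarith
        have hpr : 0 ≤ (Real.exp L - 1) * (3 - L * y) - L := by
          nlinarith [mul_nonneg (show (0:ℝ) ≤ Real.exp L - 1 by linarith)
            (show (0:ℝ) ≤ 2 - L * y by linarith)]
        exact mul_nonneg (mul_nonneg (sq_nonneg L) (Real.exp_pos _).le) hpr
    have hGs : G s ≤ G s' := hmono ⟨hs, hss⟩ ⟨hs.trans hss, le_refl _⟩ hss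
    calc min (f2 L s) (2 * (Real.exp (-L) - 1 + L)) ≤ f2 L s := min_le_left _ _
    _ ≤ f2 L s' := by rw [hf2, hf2]; linarith


lemma cont_f0 (L : ℝ) : Continuous (f0 L) :=
  continuous_iff_continuousAt.2 fun t => (hasDerivAt_f0 L t).continuousAt

lemma cont_f1 (L : ℝ) : Continuous (f1 L) :=
  continuous_iff_continuousAt.2 fun t => (hasDerivAt_f1 L t).continuousAt

lemma f2_nonneg_ge_one {L : ℝ} (hL : 0 < L) {x : ℝ} (hx : 1 ≤ x) : 0 ≤ f2 L x := by
  have h := f2_prop hL zero_le_one hx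
  have h0 : 0 ≤ min (f2 L 1) (2 * (Real.exp (-L) - 1 + L)) :=
    le_min (f2_one_nonneg hL.le) (by linarith [mu_pos hL])
  linarith

lemma f0_nonneg {L : ℝ} (hL : 0 < L) {t : ℝ} (ht : 0 ≤ t) : 0 ≤ f0 L t := by
  rcases le_or_gt t 1 with h1 | h1
  · by_contra hneg
    push_neg at hneg
    obtain ⟨u, hu, hminu⟩ := isCompact_Icc.exists_isMinOn (nonempty_Icc.2 zero_le_one)
      ((cont_f0 L).continuousOn)
    have hfu : f0 L u < 0 := lt_of_le_of_lt (hminu ⟨ht, h1⟩) hneg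
    have hu0 : 0 < u := by
      rcases eq_or_lt_of_le hu.1 with h | h
      · exfalso; rw [← h, f0_zero] at hfu; linarith
      · exact h
    have hu1 : u < 1 := by
      rcases eq_or_lt_of_le hu.2 with h | h
      · exfalso; rw [h, f0_one] at hfu; linarith
      · exact h
    obtain ⟨t2, ⟨ht2a, ht2b⟩, hs2⟩ := exists_hasDerivAt_eq_slope (f0 L) (f1 L) hu0
      ((cont_f0 L).continuousOn) (fun x _ => hasDerivAt_f0 L x)
    have hf1t2 : f1 L t2 < 0 := by
      rw [hs2, f0_zero]
      apply div_neg_of_neg_of_pos <;> linarith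
    obtain ⟨t3, ⟨ht3a, ht3b⟩, hs3⟩ := exists_hasDerivAt_eq_slope (f0 L) (f1 L) hu1
      ((cont_f0 L).continuousOn) (fun x _ => hasDerivAt_f0 L x)
    have hf1t3 : 0 < f1 L t3 := by
      rw [hs3, f0_one]
      apply div_pos <;> linarith
    obtain ⟨t4, ⟨ht4a, ht4b⟩, hs4⟩ := exists_hasDerivAt_eq_slope (f1 L) (f2 L) ht3b
      ((cont_f1 L).continuousOn) (fun x _ => hasDerivAt_f1 L x)
    have hf2t4 : f2 L t4 < 0 := by
      rw [hs4, f1_one]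
      apply div_neg_of_neg_of_pos <;> linarith
    have ht23 : t2 < t3 := lt_trans ht2b ht3a
    obtain ⟨t5, ⟨ht5a, ht5b⟩, hs5⟩ := exists_hasDerivAt_eq_slope (f1 L) (f2 L) ht23
      ((cont_f1 L).continuousOn) (fun x _ => hasDerivAt_f1 L x)
    have hf2t5 : 0 < f2 L t5 := by
      rw [hs5]
      apply div_pos <;> linarith
    have hprop := f2_prop hL (le_of_lt (lt_trans ht2a ht5a))
      (le_of_lt (lt_trans ht5b ht4a))
    have h0 : 0 < min (f2 L t5) (2 * (Real.exp (-L) - 1 + L)) :=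
      lt_min hf2t5 (by linarith [mu_pos hL])
    linarith
  · have hmono1 : MonotoneOn (f1 L) (Ici 1) := by
      apply monotoneOn_of_deriv_nonneg (convex_Ici 1) (cont_f1 L).continuousOn
      · exact fun x _ => (hasDerivAt_f1 L x).differentiableAt.differentiableWithinAt
      · intro x hx
        rw [(hasDerivAt_f1 L x).deriv]
        rw [interior_Ici] at hx
        exact f2_nonneg_ge_one hL (le_of_lt hx)
    have hmono0 : MonotoneOn (f0 L) (Ici 1) := by
      apply monotoneOn_of_deriv_nonneg (convex_Ici 1) (cont_f0 L).continuousOn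
      · exact fun x _ => (hasDerivAt_f0 L x).differentiableAt.differentiableWithinAt
      · intro x hx
        rw [(hasDerivAt_f0 L x).deriv]
        rw [interior_Ici] at hx
        have := hmono1 self_mem_Ici (mem_Ici.2 hx.le) hx.le
        rw [f1_one] at this
        exact this
    have := hmono0 self_mem_Ici (mem_Ici.2 h1.le) h1.le
    rw [f0_one] at this
    exact this

/-- The key inequality in rpow form. -/
lemma key_rpow {a t : ℝ} (ha0 : 0 < a) (ha1 : a < 1) (ht : 0 ≤ t) :
    1 - a ^ t - t * a ^ (t - 1) * (1 - a) ≤ (a - 1 - Real.log a) * (t * (t - 1)) := by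
  set L : ℝ := -Real.log a with hLdef
  have hL : 0 < L := by
    have : Real.log a < 0 := Real.log_neg ha0 ha1
    simp [hLdef]; linarith
  have hloga : Real.log a = -L := by simp [hLdef]
  have ha : a = Real.exp (-L) := by
    rw [← hloga, Real.exp_log ha0]
  have h1 : a ^ t = Real.exp (-(L * t)) := by
    rw [Real.rpow_def_of_pos ha0, hloga]; ring_nf
  have h2 : a ^ (t - 1) = Real.exp (-(L * t)) * Real.exp L := by
    rw [Real.rpow_def_of_pos ha0, hloga, ← Real.exp_add]; ring_nf
  have hkey := f0_nonneg hL ht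
  unfold f0 at hkey
  have hme := exp_mul_exp_neg L
  rw [h1, h2, hloga, ha]
  have hzero : t * Real.exp (-(L*t)) * (Real.exp L * Real.exp (-L) - 1) = 0 := by
    rw [hme]; ring
  nlinarith [hkey, hzero]

lemma hasDerivAt_mul_log {a : ℝ} (ha : 0 < a) :
    HasDerivAt (fun a : ℝ => a * Real.log a) (Real.log a + 1) a := by
  have h := (hasDerivAt_id a).mul (Real.hasDerivAt_log ha.ne')
  refine h.congr_deriv ?_
  field_simp
  simp only [id_eq]; ring

lemma omega_mono : MonotoneOn (fun a : ℝ => -(a * Real.log a) / (1 - a)) (Ico (0:ℝ) 1) := by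
  apply monotoneOn_of_deriv_nonneg (convex_Ico 0 1)
  · apply ContinuousOn.div
    · exact (continuous_mul_log.neg).continuousOn
    · exact (continuous_const.sub continuous_id).continuousOn
    · intro a ha
      have : a < 1 := ha.2
      intro hc
      rw [sub_eq_zero] at hc
      linarith
  · rw [interior_Ico]
    intro a ha
    have hN : HasDerivAt (fun a : ℝ => -(a * Real.log a)) (-(Real.log a + 1)) a :=
      (hasDerivAt_mul_log ha.1).neg
    have hD : HasDerivAt (fun a : ℝ => 1 - a) (-1) a := by
      simpa using (hasDerivAt_id a).const_sub 1
    have hne : (1 : ℝ) - a ≠ 0 := by have := ha.2; intro hc; rw [sub_eq_zero] at hc; linarith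
    exact ((hN.div hD hne)).differentiableAt.differentiableWithinAt
  · rw [interior_Ico]
    intro a ha
    have hN : HasDerivAt (fun a : ℝ => -(a * Real.log a)) (-(Real.log a + 1)) a :=
      (hasDerivAt_mul_log ha.1).neg
    have hD : HasDerivAt (fun a : ℝ => 1 - a) (-1) a := by
      simpa using (hasDerivAt_id a).const_sub 1
    have hne : (1 : ℝ) - a ≠ 0 := by have := ha.2; intro hc; rw [sub_eq_zero] at hc; linarith
    rw [show deriv (fun a : ℝ => -(a * Real.log a) / (1 - a)) a = _ from (hN.div hD hne).deriv]
    apply div_nonneg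
    · nlinarith [Real.log_le_sub_one_of_pos ha.1]
    · positivity

lemma v_antitone {t : ℝ} (ht : 0 < t) :
    AntitoneOn (fun a : ℝ => (1 - a ^ t - (t * (1 - t)) * (a * Real.log a)) / (1 - a))
      (Ico (0:ℝ) 1) := by
  have hder : ∀ a ∈ Ioo (0:ℝ) 1, HasDerivAt
      (fun a : ℝ => (1 - a ^ t - (t * (1 - t)) * (a * Real.log a)) / (1 - a))
      (((-(t * a ^ (t - 1)) - (t * (1 - t)) * (Real.log a + 1)) * (1 - a)
        - (1 - a ^ t - (t * (1 - t)) * (a * Real.log a)) * (-1)) / (1 - a) ^ 2) a := by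
    intro a ha
    have hne : (1 : ℝ) - a ≠ 0 := by
      have := ha.2; intro hc; rw [sub_eq_zero] at hc; linarith
    have hpow : HasDerivAt (fun x : ℝ => x ^ t) (t * a ^ (t - 1)) a :=
      Real.hasDerivAt_rpow_const (Or.inl ha.1.ne')
    have hN : HasDerivAt (fun a : ℝ => 1 - a ^ t - (t * (1 - t)) * (a * Real.log a))
        (-(t * a ^ (t - 1)) - (t * (1 - t)) * (Real.log a + 1)) a := by
      exact (hpow.const_sub 1).sub ((hasDerivAt_mul_log ha.1).const_mul (t * (1 - t)))
    have hD : HasDerivAt (fun a : ℝ => 1 - a) (-1) a := by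
      simpa using (hasDerivAt_id a).const_sub 1
    exact hN.div hD hne
  apply antitoneOn_of_deriv_nonpos (convex_Ico 0 1)
  · apply ContinuousOn.div
    · apply ContinuousOn.sub
      · apply ContinuousOn.sub continuousOn_const
        exact fun a _ => (Real.continuousAt_rpow_const a t (Or.inr ht.le)).continuousWithinAt
      · exact (continuous_const.mul continuous_mul_log).continuousOn
    · exact (continuous_const.sub continuous_id).continuousOn
    · intro a ha
      intro hc
      rw [sub_eq_zero] at hc
      have := ha.2; linarith
  · rw [interior_Ico]
    exact fun a ha => (hder a ha).differentiableAt.differentiableWithinAt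
  · rw [interior_Ico]
    intro a ha
    rw [(hder a ha).deriv]
    apply div_nonpos_of_nonpos_of_nonneg
    · have hk := key_rpow ha.1 ha.2 ht.le
      nlinarith [hk]
    · positivity

lemma bern_ge_one_upper {a t : ℝ} (ha0 : 0 < a) (ht : 1 ≤ t) :
    1 - a ^ t ≤ t * (1 - a) := by
  have h := one_add_mul_self_le_rpow_one_add (s := a - 1) (by linarith) ht
  rw [show (1:ℝ) + (a - 1) = a by ring] at h
  linarith

lemma bern_ge_one_lower {a t : ℝ} (ha0 : 0 < a) (ht : 1 ≤ t) :
    t * a ^ (t - 1) * (1 - a) ≤ 1 - a ^ t := by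
  have h := one_add_mul_self_le_rpow_one_add (s := 1/a - 1) (by
    have : 0 < 1/a := by positivity
    linarith) ht
  rw [show (1:ℝ) + (1/a - 1) = 1/a by ring] at h
  have hat : 0 < a ^ t := Real.rpow_pos_of_pos ha0 t
  have hinv : (1/a : ℝ) ^ t = (a ^ t)⁻¹ := by
    rw [one_div, Real.inv_rpow ha0.le]
  rw [hinv] at h
  have h2 : a ^ t * (1 + t * (1/a - 1)) ≤ 1 := by
    have h4 := mul_le_mul_of_nonneg_left h hat.le
    rwa [mul_inv_cancel₀ hat.ne'] at h4
  have hsub : a ^ (t - 1) = a ^ t / a := by rw [Real.rpow_sub ha0, Real.rpow_one]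
  have h3 : a ^ t * (1 + t * (1/a - 1)) = a ^ t + t * (a ^ t / a) * (1 - a) := by
    field_simp
  rw [h3] at h2
  rw [hsub]
  linarith

lemma bern_le_one_lower {a t : ℝ} (ha0 : 0 < a) (ha1 : a < 1) (ht0 : 0 < t) (ht : t ≤ 1) :
    t * (1 - a) ≤ 1 - a ^ t := by
  have hat0 : 0 < a ^ t := Real.rpow_pos_of_pos ha0 t
  have h := bern_ge_one_upper hat0 (one_le_one_div ht0 ht)
  have hpow : (a ^ t) ^ (1/t) = a := by
    rw [← Real.rpow_mul ha0.le, mul_one_div_cancel ht0.ne', Real.rpow_one]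
  rw [hpow] at h
  have h2 := mul_le_mul_of_nonneg_left h ht0.le
  have h3 : t * (1/t * (1 - a ^ t)) = 1 - a ^ t := by field_simp
  linarith [h2, h3.le, h3.ge]

lemma bern_le_one_upper {a t : ℝ} (ha0 : 0 < a) (ha1 : a < 1) (ht0 : 0 < t) (ht : t ≤ 1) :
    1 - a ^ t ≤ t * a ^ (t - 1) * (1 - a) := by
  have hat0 : 0 < a ^ t := Real.rpow_pos_of_pos ha0 t
  have h := bern_ge_one_lower hat0 (one_le_one_div ht0 ht)
  have hpow : (a ^ t) ^ (1/t) = a := by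
    rw [← Real.rpow_mul ha0.le, mul_one_div_cancel ht0.ne', Real.rpow_one]
  have hpow2 : (a ^ t) ^ (1/t - 1) = a ^ (1 - t) := by
    rw [← Real.rpow_mul ha0.le]
    congr 1
    field_simp
  rw [hpow, hpow2] at h
  -- h : 1/t * a^(1-t) * (1 - a^t) ≤ 1 - a
  have hm : 0 ≤ t * a ^ (t - 1) := by positivity
  have h2 := mul_le_mul_of_nonneg_left h hm
  have hcomb : a ^ (t - 1) * a ^ (1 - t) = 1 := by
    rw [← Real.rpow_add ha0]
    norm_num
  have h3 : t * a ^ (t-1) * (1/t * a ^ (1-t) * (1 - a ^ t))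
      = (a ^ (t-1) * a ^ (1-t)) * (1 - a ^ t) := by
    field_simp
  rw [h3, hcomb, one_mul] at h2
  linarith

lemma div_le_div_of_nonneg_right' {a b c : ℝ} (h : a ≤ b) (hc : 0 < c) : a / c ≤ b / c := by
  apply div_le_div_of_nonneg_right h hc.le

lemma integrand_sandwich {a c d t : ℝ} (ha0 : 0 < a) (ha1 : a < 1) (hc : 0 < c)
    (hc1 : c ≤ 1) (hd : 1 ≤ d) (htc : c ≤ t) (htd : t ≤ d) :
    (1 - ((a ^ (c-1) - 1) + (1 - a ^ (d-1)))) * (1/t) ≤ (1 - a ^ t) / ((1 - a) * t ^ 2)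
    ∧ (1 - a ^ t) / ((1 - a) * t ^ 2) ≤ (1 + ((a ^ (c-1) - 1) + (1 - a ^ (d-1)))) * (1/t) := by
  have ht0 : 0 < t := lt_of_lt_of_le hc htc
  have h1a : 0 < 1 - a := by linarith
  set δ := (a ^ (c-1) - 1) + (1 - a ^ (d-1)) with hδ
  have hδ1 : 0 ≤ a ^ (c-1) - 1 := by
    have := Real.one_le_rpow_of_pos_of_le_one_of_nonpos ha0 ha1.le (by linarith : c - 1 ≤ 0)
    linarith
  have hδ2 : 0 ≤ 1 - a ^ (d-1) := by
    have := Real.rpow_le_one ha0.le ha1.le (by linarith : 0 ≤ d - 1)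
    linarith
  have hδ0 : 0 ≤ δ := by rw [hδ]; linarith
  have hub : 1 - a ^ t ≤ t * (1 + δ) * (1 - a) := by
    rcases le_total t 1 with h | h
    · calc 1 - a ^ t ≤ t * a ^ (t-1) * (1 - a) := bern_le_one_upper ha0 ha1 ht0 h
        _ ≤ t * a ^ (c-1) * (1 - a) := by
            have hle := Real.rpow_le_rpow_of_exponent_ge ha0 ha1.le (by linarith : c - 1 ≤ t - 1)
            apply mul_le_mul_of_nonneg_right (mul_le_mul_of_nonneg_left hle ht0.le) h1a.le
        _ ≤ t * (1 + δ) * (1 - a) := by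
            have h2 : a ^ (c-1) ≤ 1 + δ := by rw [hδ]; linarith
            apply mul_le_mul_of_nonneg_right (mul_le_mul_of_nonneg_left h2 ht0.le) h1a.le
    · calc 1 - a ^ t ≤ t * (1 - a) := bern_ge_one_upper ha0 h
        _ ≤ t * (1 + δ) * (1 - a) := by
            have h2 : (1:ℝ) ≤ 1 + δ := by linarith
            nlinarith [mul_le_mul_of_nonneg_right (mul_le_mul_of_nonneg_left h2 ht0.le) h1a.le]
  have hlb : t * (1 - δ) * (1 - a) ≤ 1 - a ^ t := by
    rcases le_total t 1 with h | h
    · calc t * (1 - δ) * (1 - a) ≤ t * 1 * (1 - a) := by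
            have h2 : 1 - δ ≤ (1:ℝ) := by linarith
            apply mul_le_mul_of_nonneg_right (mul_le_mul_of_nonneg_left h2 ht0.le) h1a.le
        _ = t * (1 - a) := by ring
        _ ≤ 1 - a ^ t := bern_le_one_lower ha0 ha1 ht0 h
    · calc t * (1 - δ) * (1 - a) ≤ t * a ^ (d-1) * (1 - a) := by
            have h2 : 1 - δ ≤ a ^ (d-1) := by rw [hδ]; linarith
            apply mul_le_mul_of_nonneg_right (mul_le_mul_of_nonneg_left h2 ht0.le) h1a.le
        _ ≤ t * a ^ (t-1) * (1 - a) := by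
            have hle := Real.rpow_le_rpow_of_exponent_ge ha0 ha1.le (by linarith : t - 1 ≤ d - 1)
            apply mul_le_mul_of_nonneg_right (mul_le_mul_of_nonneg_left hle ht0.le) h1a.le
        _ ≤ 1 - a ^ t := bern_ge_one_lower ha0 h
  have hden : (0:ℝ) < (1 - a) * t ^ 2 := by positivity
  constructor
  · have heq : (1 - δ) * (1/t) = (t * (1 - δ) * (1 - a)) / ((1 - a) * t ^ 2) := by
      field_simp
    rw [heq]
    exact div_le_div_of_nonneg_right' hlb hden
  · have heq : (1 + δ) * (1/t) = (t * (1 + δ) * (1 - a)) / ((1 - a) * t ^ 2) := by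
      field_simp
    rw [heq]
    exact div_le_div_of_nonneg_right' hub hden

lemma integrand_contOn {a : ℝ} (ha0 : 0 ≤ a) (ha1 : a < 1) {c d : ℝ} (hc : 0 < c) :
    ContinuousOn (fun t : ℝ => (1 - a ^ t) / ((1 - a) * t ^ 2)) (Icc c d) := by
  apply ContinuousOn.div
  · rcases eq_or_lt_of_le ha0 with h0 | h0
    · have heq0 : EqOn (fun t : ℝ => 1 - a ^ t) (fun _ : ℝ => (1:ℝ)) (Icc c d) := by
        intro t htm
        have ht : t ≠ 0 := ne_of_gt (lt_of_lt_of_le hc htm.1)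
        simp [← h0, Real.zero_rpow ht]
      exact continuousOn_const.congr heq0
    · apply continuousOn_const.sub
      have heq : EqOn (fun t : ℝ => a ^ t) (fun t : ℝ => Real.exp (Real.log a * t)) (Icc c d) :=
        fun t _ => Real.rpow_def_of_pos h0 t
      exact ((Real.continuous_exp.comp (continuous_const.mul continuous_id)).continuousOn).congr heq
  · exact (continuous_const.mul (continuous_pow 2)).continuousOn
  · intro t htm
    have ht : 0 < t := lt_of_lt_of_le hc htm.1
    have : 0 < 1 - a := by linarith
    positivity

lemma pointwise_antitone {a1 a2 t : ℝ} (h1 : a1 ∈ Ico (0:ℝ) 1) (h2 : a2 ∈ Ico (0:ℝ) 1)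
    (h12 : a1 ≤ a2) (ht : 0 < t) :
    (1 - a2 ^ t) / ((1 - a2) * t ^ 2)
      + (-(a2 * Real.log a2)/(1 - a2) - -(a1 * Real.log a1)/(1 - a1)) * ((1 - t)/t)
    ≤ (1 - a1 ^ t) / ((1 - a1) * t ^ 2) := by
  have hv := v_antitone ht h1 h2 h12
  simp only at hv
  have ht2 : (0:ℝ) < t ^ 2 := by positivity
  have hdv := div_le_div_of_nonneg_right' hv ht2
  have h1ne : (1:ℝ) - a1 ≠ 0 := by have := h1.2; intro hx; rw [sub_eq_zero] at hx; linarith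
  have h2ne : (1:ℝ) - a2 ≠ 0 := by have := h2.2; intro hx; rw [sub_eq_zero] at hx; linarith
  have htne : t ≠ 0 := ht.ne'
  have e1 : (1 - a1 ^ t - t * (1 - t) * (a1 * Real.log a1)) / (1 - a1) / t ^ 2
      = (1 - a1 ^ t) / ((1 - a1) * t ^ 2) + (-(a1 * Real.log a1)/(1 - a1)) * ((1 - t)/t) := by
    field_simp
    ring
  have e2 : (1 - a2 ^ t - t * (1 - t) * (a2 * Real.log a2)) / (1 - a2) / t ^ 2
      = (1 - a2 ^ t) / ((1 - a2) * t ^ 2) + (-(a2 * Real.log a2)/(1 - a2)) * ((1 - t)/t) := by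
    field_simp
    ring
  rw [e1, e2] at hdv
  linarith

end HKeyProof

open HKeyProof

theorem H_decreasing_and_limit (β : ℝ) (hβ : β ∈ Set.Icc (0:ℝ) (1 / (exp 1 - 1)))
    (H : ℝ → ℝ)
    (hH : ∀ a, H a = ∫ t in ((1 + β) / exp 1)..(1 + β), (1 - a ^ t) / ((1 - a) * t ^ 2)) :
    AntitoneOn H (Set.Ico (0:ℝ) 1) ∧
    Tendsto H (nhdsWithin 1 (Set.Iio 1)) (nhds 1) := by
  obtain ⟨hβ0, hβ1⟩ := hβ
  have hE2 : (2:ℝ) < Real.exp 1 := by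
    have := Real.add_one_lt_exp (one_ne_zero (α := ℝ))
    linarith
  have hEpos : (0:ℝ) < Real.exp 1 := Real.exp_pos 1
  set c : ℝ := (1 + β) / Real.exp 1 with hcdef
  set d : ℝ := 1 + β with hddef
  have hd1 : (1:ℝ) ≤ d := by rw [hddef]; linarith
  have hd0 : (0:ℝ) < d := by linarith
  have hc0 : (0:ℝ) < c := by rw [hcdef]; positivity
  have hβE : β * (Real.exp 1 - 1) ≤ 1 := by
    rw [le_div_iff₀ (by linarith)] at hβ1
    linarith
  have hc1 : c ≤ 1 := by
    rw [hcdef, div_le_one hEpos]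
    nlinarith
  have hcd : c ≤ d := by
    rw [hcdef, div_le_iff₀ hEpos]
    nlinarith
  have hdc : d - c ≤ 1 := by
    have heq : d - c = ((1 + β) * Real.exp 1 - (1 + β)) / Real.exp 1 := by
      rw [hcdef, hddef]
      field_simp
    rw [heq, div_le_iff₀ hEpos]
    nlinarith
  have hdcE : d / c = Real.exp 1 := by
    rw [hcdef, hddef]
    field_simp
  have h0nm : (0:ℝ) ∉ Set.uIcc c d := by
    rw [uIcc_of_le hcd]
    intro hm
    exact absurd hm.1 (by linarith)
  have hI1 : (∫ t in c..d, 1/t) = 1 := by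
    rw [integral_one_div h0nm, hdcE, Real.log_exp]
  have hIdiv : IntervalIntegrable (fun t : ℝ => 1/t) MeasureTheory.volume c d := by
    apply ContinuousOn.intervalIntegrable
    rw [uIcc_of_le hcd]
    exact ContinuousOn.div continuousOn_const continuousOn_id
      (fun t htm => ne_of_gt (lt_of_lt_of_le hc0 htm.1))
  have hIint : ∀ a : ℝ, 0 ≤ a → a < 1 →
      IntervalIntegrable (fun t : ℝ => (1 - a^t)/((1-a)*t^2)) MeasureTheory.volume c d := by
    intro a h0 h1'
    apply ContinuousOn.intervalIntegrable
    rw [uIcc_of_le hcd]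
    exact integrand_contOn h0 h1' hc0
  constructor
  · -- Antitone
    intro a1 h1m a2 h2m h12
    rw [hH a1, hH a2]
    set C : ℝ := -(a2 * Real.log a2)/(1 - a2) - -(a1 * Real.log a1)/(1 - a1) with hCdef
    have hC0 : 0 ≤ C := sub_nonneg.2 (omega_mono h1m h2m h12)
    have hIC : IntervalIntegrable (fun t : ℝ => C * ((1 - t)/t)) MeasureTheory.volume c d := by
      apply ContinuousOn.intervalIntegrable
      rw [uIcc_of_le hcd]
      exact continuousOn_const.mul (ContinuousOn.div (continuousOn_const.sub continuousOn_id)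
        continuousOn_id (fun t htm => ne_of_gt (lt_of_lt_of_le hc0 htm.1)))
    have hpt : ∀ t ∈ Icc c d, (1 - a2^t)/((1-a2)*t^2) + C * ((1-t)/t)
        ≤ (1 - a1^t)/((1-a1)*t^2) :=
      fun t htm => pointwise_antitone h1m h2m h12 (lt_of_lt_of_le hc0 htm.1)
    have hIa2C := (hIint a2 h2m.1 h2m.2).add hIC
    have hmono := integral_mono_on hcd hIa2C (hIint a1 h1m.1 h1m.2) hpt
    rw [integral_add (hIint a2 h2m.1 h2m.2) hIC, integral_const_mul] at hmono
    have hI2 : (∫ t in c..d, (1 - t)/t) = 1 - (d - c) := by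
      have hcg : EqOn (fun t : ℝ => (1-t)/t) (fun t : ℝ => 1/t - 1) (Set.uIcc c d) := by
        rw [uIcc_of_le hcd]
        intro t htm
        have htne : t ≠ 0 := ne_of_gt (lt_of_lt_of_le hc0 htm.1)
        field_simp
      rw [integral_congr hcg, integral_sub hIdiv intervalIntegrable_const, hI1, integral_const]
      simp
    rw [hI2] at hmono
    have h6 : 0 ≤ C * (1 - (d - c)) := mul_nonneg hC0 (by linarith)
    clear_value C c d
    calc (∫ t in c..d, (1 - a2^t)/((1-a2)*t^2))
        ≤ (∫ t in c..d, (1 - a2^t)/((1-a2)*t^2)) + C * (1 - (d - c)) := by linarith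
      _ ≤ ∫ t in c..d, (1 - a1^t)/((1-a1)*t^2) := hmono
  · -- Limit
    set δf : ℝ → ℝ := fun a => (a ^ (c-1) - 1) + (1 - a ^ (d-1)) with hδf
    have hsq : ∀ a ∈ Ioo (0:ℝ) 1, 1 - δf a ≤ H a ∧ H a ≤ 1 + δf a := by
      intro a ha
      have hIlow : IntervalIntegrable (fun t : ℝ => (1 - δf a) * (1/t))
          MeasureTheory.volume c d := hIdiv.const_mul _
      have hIhigh : IntervalIntegrable (fun t : ℝ => (1 + δf a) * (1/t))
          MeasureTheory.volume c d := hIdiv.const_mul _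
      constructor
      · have hm := integral_mono_on hcd hIlow (hIint a ha.1.le ha.2)
          (fun t htm => (integrand_sandwich ha.1 ha.2 hc0 hc1 hd1 htm.1 htm.2).1)
        rw [integral_const_mul, hI1, mul_one] at hm
        rw [hH a]
        exact hm
      · have hm := integral_mono_on hcd (hIint a ha.1.le ha.2) hIhigh
          (fun t htm => (integrand_sandwich ha.1 ha.2 hc0 hc1 hd1 htm.1 htm.2).2)
        rw [integral_const_mul, hI1, mul_one] at hm
        rw [hH a]
        exact hm
    have htδ : Tendsto δf (nhds 1) (nhds 0) := by
      have h1 : ContinuousAt (fun a : ℝ => a ^ (c-1)) 1 :=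
        Real.continuousAt_rpow_const 1 (c-1) (Or.inl one_ne_zero)
      have h2 : ContinuousAt (fun a : ℝ => a ^ (d-1)) 1 :=
        Real.continuousAt_rpow_const 1 (d-1) (Or.inl one_ne_zero)
      have h3 : ContinuousAt δf 1 := by
        rw [hδf]
        exact (h1.sub continuousAt_const).add (continuousAt_const.sub h2)
      have h4 := h3.tendsto
      have h5 : δf 1 = 0 := by
        rw [hδf]
        simp [Real.one_rpow]
      rwa [h5] at h4
    have htδ' : Tendsto δf (nhdsWithin 1 (Set.Iio 1)) (nhds 0) :=
      htδ.mono_left nhdsWithin_le_nhds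
    apply tendsto_of_tendsto_of_tendsto_of_le_of_le'
      (g := fun a => 1 - δf a) (h := fun a => 1 + δf a)
    · simpa using tendsto_const_nhds.sub htδ'
    · simpa using tendsto_const_nhds.add htδ'
    · filter_upwards [Ioo_mem_nhdsLT_of_mem
        (show (1:ℝ) ∈ Ioc 0 1 by constructor <;> norm_num)] with a ha
      exact (hsq a ha).1
    · filter_upwards [Ioo_mem_nhdsLT_of_mem
        (show (1:ℝ) ∈ Ioc 0 1 by constructor <;> norm_num)] with a ha
      exact (hsq a ha).2
end

section
/- Let S₁,…,S_k, X₁,…,X_{i-1}, X_i be i.i.d. continuous (atomless) real random variables. Conditioned on reaching step i, any MRS algorithm's decision to stop at step i depends only on the relative ranks of X_i and a uniformly random f(i)-subset of the previous values, and these ranks are distributed as a uniform draw of f(i)+1 ranks without replacement from [k+i]; consequently, conditioned on the algorithm reaching step i, the set {S₁,…,S_k, X₁,…,X_{i-1}} is distributed as k+i-1 fresh i.i.d. samples from the same distribution. -/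
open MeasureTheory Set Function

section Aux

variable {m : ℕ} (μ : Measure ℝ) [IsProbabilityMeasure μ]

lemma perm_measurable (τ : Equiv.Perm (Fin m)) :
    Measurable (fun v : Fin m → ℝ => v ∘ τ) :=
  measurable_pi_lambda _ fun i => measurable_pi_apply (τ i)

lemma perm_measurePreserving (τ : Equiv.Perm (Fin m)) :
    MeasurePreserving (fun v : Fin m → ℝ => v ∘ τ)
      (Measure.pi fun _ : Fin m => μ) (Measure.pi fun _ : Fin m => μ) := by
  refine ⟨perm_measurable τ, ?_⟩
  refine (Measure.pi_eq fun s hs => ?_).symm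
  rw [Measure.map_apply (perm_measurable τ) (MeasurableSet.univ_pi hs)]
  have hpre : (fun v : Fin m → ℝ => v ∘ τ) ⁻¹' (Set.pi univ s)
      = Set.pi univ (fun i => s (τ.symm i)) := by
    ext v
    simp only [mem_preimage, mem_univ_pi, comp_apply]
    constructor
    · intro h i; simpa using h (τ.symm i)
    · intro h i; simpa using h (τ i)
  rw [hpre, Measure.pi_pi]
  exact Equiv.prod_comp τ.symm fun i => μ (s i)

lemma pair_eq_null [NullSingletonClass μ] {j j' : Fin m} (hjj : j ≠ j') :
    (Measure.pi fun _ : Fin m => μ) {v : Fin m → ℝ | v j = v j'} = 0 := by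
  classical
  set ν := (Measure.pi fun _ : Fin m => μ) with hν
  have hT : Measurable (fun v : Fin m → ℝ => (v j, v j')) :=
    (measurable_pi_apply j).prodMk (measurable_pi_apply j')
  have hdiag : MeasurableSet {p : ℝ × ℝ | p.1 = p.2} :=
    (isClosed_eq continuous_fst continuous_snd).measurableSet
  have hmap : Measure.map (fun v : Fin m → ℝ => (v j, v j')) ν = μ.prod μ := by
    refine (Measure.prod_eq fun s t hs ht => ?_).symm
    rw [Measure.map_apply hT (hs.prod ht)]
    set f : Fin m → Set ℝ :=
      Function.update (Function.update (fun _ => (univ : Set ℝ)) j s) j' t with hf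
    have hpre : (fun v : Fin m → ℝ => (v j, v j')) ⁻¹' (s ×ˢ t) = Set.pi univ f := by
      ext v
      simp only [mem_preimage, mem_prod, mem_univ_pi]
      constructor
      · rintro ⟨h1, h2⟩ i
        rcases eq_or_ne i j' with rfl | hij'
        · simpa [hf] using h2
        rcases eq_or_ne i j with rfl | hij
        · simpa [hf, Function.update_of_ne hij'] using h1
        · simp [hf, Function.update_of_ne hij', Function.update_of_ne hij]
      · intro h
        refine ⟨?_, ?_⟩
        · have := h j; simpa [hf, Function.update_of_ne hjj] using this
        · have := h j'; simpa [hf] using this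
    rw [hpre, hν, Measure.pi_pi]
    have hone : ∀ i ∈ Finset.univ, i ∉ ({j, j'} : Finset (Fin m)) → μ (f i) = 1 := by
      intro i _ hi
      simp only [Finset.mem_insert, Finset.mem_singleton, not_or] at hi
      simp [hf, Function.update_of_ne hi.2, Function.update_of_ne hi.1]
    rw [← Finset.prod_subset (Finset.subset_univ ({j, j'} : Finset (Fin m))) hone,
      Finset.prod_pair hjj]
    simp [hf, Function.update_of_ne hjj]
  have hset : {v : Fin m → ℝ | v j = v j'}
      = (fun v : Fin m → ℝ => (v j, v j')) ⁻¹' {p : ℝ × ℝ | p.1 = p.2} := rfl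
  rw [hset, ← Measure.map_apply hT hdiag, hmap, Measure.measure_prod_null hdiag]
  filter_upwards with x
  have : Prod.mk x ⁻¹' {p : ℝ × ℝ | p.1 = p.2} = {x} := by
    ext y; simp [eq_comm]
  simp [this]

end Aux

/-- Fresh-samples lemma. Let `V : Ω → (Fin m → ℝ)` be a vector of `m = k + i - 1` (here
written `m`) i.i.d. draws from an atomless distribution `μ` (the samples `S₁,…,S_k` together
with `X₁,…,X_{i-1}`, and `X_i` may be included as the last coordinate). If the event `E`
("the MRS algorithm reaches step `i` / decides based on step `i`") depends only on the
relative ranks of the coordinates of `V`, then conditioned on `E` the (unordered) collection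
of values is distributed as fresh i.i.d. samples: `E` is independent of every
permutation-invariant (symmetric) measurable set of value vectors. -/
theorem fresh_samples_lemma
    {Ω : Type*} [MeasurableSpace Ω] (P : Measure Ω) [IsProbabilityMeasure P]
    (m : ℕ) (μ : Measure ℝ) [IsProbabilityMeasure μ] [NullSingletonClass μ]
    (V : Ω → Fin m → ℝ) (hV : Measurable V)
    (hlaw : Measure.map V P = Measure.pi fun _ : Fin m => μ)
    (E : Set Ω) (hE : MeasurableSet E)
    -- `E` depends only on the relative ranks of the coordinates of `V`
    (hrank : ∀ ω ω' : Ω,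
      (∀ j j' : Fin m, V ω j < V ω j' ↔ V ω' j < V ω' j') → (ω ∈ E ↔ ω' ∈ E)) :
    ∀ S : Set (Fin m → ℝ), MeasurableSet S →
      (∀ σ : Equiv.Perm (Fin m), (fun v : Fin m → ℝ => v ∘ σ) ⁻¹' S = S) →
      P (E ∩ V ⁻¹' S) = P E * P (V ⁻¹' S) := by
  classical
  intro S hS hSperm
  set ν : Measure (Fin m → ℝ) := Measure.pi fun _ : Fin m => μ with hν
  -- pattern sets
  set C : Equiv.Perm (Fin m) → Set (Fin m → ℝ) :=
    fun σ => {v | StrictMono (v ∘ σ)} with hC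
  have hCmeas : ∀ σ, MeasurableSet (C σ) := by
    intro σ
    have : C σ = ⋂ (a : Fin m) (b : Fin m) (_ : a < b),
        {v : Fin m → ℝ | v (σ a) < v (σ b)} := by
      ext v
      simp only [hC, mem_setOf_eq, mem_iInter, StrictMono, comp_apply]
    rw [this]
    exact MeasurableSet.iInter fun a => MeasurableSet.iInter fun b =>
      MeasurableSet.iInter fun _ =>
        measurableSet_lt (measurable_pi_apply _) (measurable_pi_apply _)
  -- each pattern set consists of injective vectors
  have hCinj : ∀ σ, ∀ v ∈ C σ, Function.Injective v := by
    intro σ v hv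
    have h1 : Function.Injective (v ∘ σ) := (hv : StrictMono (v ∘ σ)).injective
    intro a b hab
    have := h1 (show (v ∘ σ) (σ.symm a) = (v ∘ σ) (σ.symm b) by
      simp [comp_apply, hab])
    simpa using congrArg σ this
  -- pattern sets are pairwise disjoint
  have hCdisj : ∀ σ τ : Equiv.Perm (Fin m), σ ≠ τ → Disjoint (C σ) (C τ) := by
    intro σ τ hστ
    rw [Set.disjoint_left]
    intro v hvσ hvτ
    apply hστ
    have hinj := hCinj σ v hvσ
    have hσ : StrictMono (v ∘ σ) := hvσ
    have hτ : StrictMono (v ∘ τ) := hvτ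
    have hrange : Set.range (v ∘ σ) = Set.range (v ∘ τ) := by
      rw [Function.Surjective.range_comp σ.surjective,
        Function.Surjective.range_comp τ.surjective]
    have heq := (@StrictMono.range_inj (Fin m) ℝ _ _ Finite.to_wellFoundedLT _ _ hσ hτ).1 hrange
    apply Equiv.ext
    intro a
    exact hinj (congrFun heq a)
  -- every injective vector lies in some pattern set
  have hCcover : ∀ v : Fin m → ℝ, Function.Injective v → ∃ σ, v ∈ C σ := by
    intro v hv
    refine ⟨Tuple.sort v, ?_⟩
    exact (Tuple.monotone_sort v).strictMono_of_injective
      (hv.comp (Tuple.sort v).injective)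
  -- the key exchange property
  have hkey : ∀ σ τ : Equiv.Perm (Fin m), ν (C σ ∩ S) = ν (C τ ∩ S) := by
    intro σ τ
    set ρ : Equiv.Perm (Fin m) := τ * σ⁻¹ with hρ
    have hpre : (fun v : Fin m → ℝ => v ∘ ρ) ⁻¹' (C σ ∩ S) = C τ ∩ S := by
      rw [Set.preimage_inter, hSperm ρ]
      congr 1
      ext v
      simp only [hC, mem_preimage, mem_setOf_eq]
      have : (v ∘ ρ) ∘ σ = v ∘ (ρ * σ) := by
        ext a; simp [hρ, Equiv.Perm.mul_apply]
      rw [this]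
      simp [hρ]
    rw [← hpre, (perm_measurePreserving μ ρ).measure_preimage
      (((hCmeas σ).inter hS).nullMeasurableSet)]
  have hkeyC : ∀ σ τ : Equiv.Perm (Fin m), ν (C σ) = ν (C τ) := by
    intro σ τ
    set ρ : Equiv.Perm (Fin m) := τ * σ⁻¹ with hρ
    have hpre : (fun v : Fin m → ℝ => v ∘ ρ) ⁻¹' (C σ) = C τ := by
      ext v
      simp only [hC, mem_preimage, mem_setOf_eq]
      have : (v ∘ ρ) ∘ σ = v ∘ (ρ * σ) := by
        ext a; simp [hρ, Equiv.Perm.mul_apply]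
      rw [this]
      simp [hρ]
    rw [← hpre, (perm_measurePreserving μ ρ).measure_preimage
      ((hCmeas σ).nullMeasurableSet)]
  -- the injectivity set
  set D : Set (Fin m → ℝ) := {v | Function.Injective v} with hD
  have hDc : Dᶜ = ⋃ (j : Fin m) (j' : Fin m) (_ : j ≠ j'), {v : Fin m → ℝ | v j = v j'} := by
    ext v
    simp only [hD, mem_compl_iff, mem_setOf_eq, mem_iUnion, Function.Injective]
    constructor
    · intro h
      push_neg at h
      obtain ⟨a, b, hab, hne⟩ := h
      exact ⟨a, b, hne, hab⟩
    · rintro ⟨a, b, hne, hab⟩ h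
      exact hne (h hab)
  have hDcMeas : MeasurableSet Dᶜ := by
    rw [hDc]
    exact MeasurableSet.iUnion fun j => MeasurableSet.iUnion fun j' =>
      MeasurableSet.iUnion fun _ =>
        measurableSet_eq_fun (measurable_pi_apply j) (measurable_pi_apply j')
  have hDMeas : MeasurableSet D := by
    have := hDcMeas.compl
    rwa [compl_compl] at this
  have hDc0 : ν Dᶜ = 0 := by
    rw [hDc]
    refine measure_iUnion_null fun j => measure_iUnion_null fun j' => ?_
    rcases eq_or_ne j j' with rfl | hne
    · simp
    · simpa [hne] using pair_eq_null μ hne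
  -- the set Q of patterns realized by E
  set Q : Finset (Equiv.Perm (Fin m)) :=
    Finset.univ.filter (fun σ => ∃ ω ∈ E, V ω ∈ C σ) with hQ
  set A : Set (Fin m → ℝ) := ⋃ σ ∈ Q, C σ with hA
  have hAmeas : MeasurableSet A := by
    exact MeasurableSet.biUnion Q.countable_toSet fun σ _ => hCmeas σ
  -- E agrees with V ⁻¹' A on V ⁻¹' D
  have hEA : E ∩ V ⁻¹' D = V ⁻¹' A ∩ V ⁻¹' D := by
    ext ω
    simp only [mem_inter_iff, mem_preimage, hD, mem_setOf_eq]
    constructor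
    · rintro ⟨hωE, hinj⟩
      obtain ⟨σ, hσ⟩ := hCcover (V ω) hinj
      refine ⟨?_, hinj⟩
      rw [hA]
      refine mem_biUnion ?_ hσ
      rw [hQ]
      exact Finset.mem_filter.2 ⟨Finset.mem_univ _, ω, hωE, hσ⟩
    · rintro ⟨hωA, hinj⟩
      refine ⟨?_, hinj⟩
      rw [hA] at hωA
      obtain ⟨σ, hσQ, hσ⟩ := mem_iUnion₂.1 hωA
      rw [hQ] at hσQ
      simp only [Finset.mem_filter, Finset.mem_univ, true_and] at hσQ
      obtain ⟨ω', hω'E, hω'σ⟩ := hσQ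
      refine (hrank ω ω' ?_).2 hω'E
      intro j j'
      have h1 : StrictMono (V ω ∘ σ) := hσ
      have h2 : StrictMono (V ω' ∘ σ) := hω'σ
      constructor
      · intro h
        have : σ.symm j < σ.symm j' := by
          by_contra hle
          push_neg at hle
          rcases lt_or_eq_of_le hle with hlt | heq
          · have := h1 hlt
            simp only [comp_apply, Equiv.apply_symm_apply] at this
            exact absurd h (not_lt.2 this.le)
          · have : j' = j := by
              have := congrArg σ heq
              simpa using this
            exact absurd h (by simp [this])
        have := h2 this
        simpa using this
      · intro h
        have : σ.symm j < σ.symm j' := by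
          by_contra hle
          push_neg at hle
          rcases lt_or_eq_of_le hle with hlt | heq
          · have := h2 hlt
            simp only [comp_apply, Equiv.apply_symm_apply] at this
            exact absurd h (not_lt.2 this.le)
          · have : j' = j := by
              have := congrArg σ heq
              simpa using this
            exact absurd h (by simp [this])
        have := h1 this
        simpa using this
  -- transfer to ν
  have hpull : ∀ B : Set (Fin m → ℝ), MeasurableSet B → P (V ⁻¹' B) = ν B := by
    intro B hB
    rw [← hlaw, Measure.map_apply hV hB]
  have hVDc0 : P (V ⁻¹' Dᶜ) = 0 := by rw [hpull Dᶜ hDcMeas]; exact hDc0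
  have hEae : E =ᵐ[P] V ⁻¹' A := by
    rw [MeasureTheory.ae_eq_set]
    constructor
    · refine measure_mono_null ?_ hVDc0
      intro ω hω
      simp only [mem_diff, mem_preimage] at hω ⊢
      by_contra hωD
      simp only [mem_compl_iff, not_not, mem_preimage] at hωD
      have hmem : ω ∈ E ∩ V ⁻¹' D := ⟨hω.1, hωD⟩
      rw [hEA] at hmem
      exact hω.2 hmem.1
    · refine measure_mono_null ?_ hVDc0
      intro ω hω
      simp only [mem_diff, mem_preimage] at hω ⊢
      by_contra hωD
      simp only [mem_compl_iff, not_not] at hωD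
      have : ω ∈ V ⁻¹' A ∩ V ⁻¹' D := ⟨hω.1, hωD⟩
      rw [← hEA] at this
      exact hω.2 this.1
  -- reduce everything to ν
  have h1 : P (E ∩ V ⁻¹' S) = ν (A ∩ S) := by
    have : P (E ∩ V ⁻¹' S) = P (V ⁻¹' A ∩ V ⁻¹' S) :=
      measure_congr (hEae.inter (Filter.EventuallyEq.refl _ _))
    rw [this, ← Set.preimage_inter, hpull _ (hAmeas.inter hS)]
  have h2 : P E = ν A := by
    rw [measure_congr hEae, hpull A hAmeas]
  have h3 : P (V ⁻¹' S) = ν S := hpull S hS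
  rw [h1, h2, h3]
  -- now pure computation in ν
  have hprob : IsProbabilityMeasure ν := by
    rw [hν]; infer_instance
  set c : ENNReal := ν (C 1 ∩ S) with hc
  set d : ENNReal := ν (C 1) with hd
  set M : ℕ := Fintype.card (Equiv.Perm (Fin m)) with hM
  -- A ∩ S decomposition
  have hAS : ν (A ∩ S) = Q.card * c := by
    have : A ∩ S = ⋃ σ ∈ Q, (C σ ∩ S) := by
      rw [hA]; ext v; simp [mem_iUnion]; tauto
    rw [this, measure_biUnion_finset ?_ (fun σ _ => (hCmeas σ).inter hS)]
    · rw [Finset.sum_congr rfl (fun σ _ => (hkey σ 1))]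
      simp [mul_comm, hc]
    · intro σ hσ τ hτ hστ
      exact Set.disjoint_of_subset inter_subset_left inter_subset_left (hCdisj σ τ hστ)
  have hAν : ν A = Q.card * d := by
    rw [hA, measure_biUnion_finset ?_ (fun σ _ => hCmeas σ)]
    · rw [Finset.sum_congr rfl (fun σ _ => (hkeyC σ 1))]
      simp [mul_comm, hd]
    · intro σ hσ τ hτ hστ
      exact hCdisj σ τ hστ
  -- total decompositions
  have hScongr : ν S = ν (D ∩ S) := by
    refine (measure_congr ?_).symm
    rw [MeasureTheory.ae_eq_set]
    refine ⟨measure_mono_null (fun v hv => (hv.2 hv.1.2).elim) measure_empty, ?_⟩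
    refine measure_mono_null ?_ hDc0
    intro v hv
    exact fun h => hv.2 ⟨h, hv.1⟩
  have hDS : ν (D ∩ S) = M * c := by
    have : D ∩ S = ⋃ σ ∈ (Finset.univ : Finset (Equiv.Perm (Fin m))), (C σ ∩ S) := by
      ext v
      simp only [mem_inter_iff, mem_iUnion, Finset.mem_univ, exists_prop, true_and, hD,
        mem_setOf_eq]
      constructor
      · rintro ⟨hinj, hvS⟩
        obtain ⟨σ, hσ⟩ := hCcover v hinj
        exact ⟨σ, hσ, hvS⟩
      · rintro ⟨σ, hσ, hvS⟩
        exact ⟨hCinj σ v hσ, hvS⟩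
    rw [this, measure_biUnion_finset ?_ (fun σ _ => (hCmeas σ).inter hS)]
    · rw [Finset.sum_congr rfl (fun σ _ => (hkey σ 1))]
      simp [hM, Finset.card_univ, mul_comm, hc]
    · intro σ hσ τ hτ hστ
      exact Set.disjoint_of_subset inter_subset_left inter_subset_left (hCdisj σ τ hστ)
  have hMd : (M : ENNReal) * d = 1 := by
    have hcongr : (1 : ENNReal) = ν D := by
      have : ν D = ν univ := by
        refine measure_congr ?_
        rw [MeasureTheory.ae_eq_set]
        refine ⟨measure_mono_null (fun v hv => (hv.2 trivial).elim) measure_empty, ?_⟩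
        simpa [Set.diff_eq, Set.univ_inter] using hDc0
      rw [this]
      exact (measure_univ).symm
    have hDdecomp : ν D = M * d := by
      have : D = ⋃ σ ∈ (Finset.univ : Finset (Equiv.Perm (Fin m))), C σ := by
        ext v
        simp only [mem_iUnion, Finset.mem_univ, exists_prop, true_and, hD, mem_setOf_eq]
        exact ⟨fun hinj => hCcover v hinj, fun ⟨σ, hσ⟩ => hCinj σ v hσ⟩
      rw [this, measure_biUnion_finset ?_ (fun σ _ => hCmeas σ)]
      · rw [Finset.sum_congr rfl (fun σ _ => (hkeyC σ 1))]
        simp [hM, Finset.card_univ, mul_comm, hd]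
      · intro σ hσ τ hτ hστ
        exact hCdisj σ τ hστ
    rw [← hDdecomp, ← hcongr]
  -- final arithmetic
  rw [hAS, hAν, hScongr, hDS]
  have : (Q.card : ENNReal) * d * ((M : ENNReal) * c)
      = ((Q.card : ENNReal) * c) * ((M : ENNReal) * d) := by ring
  rw [this, hMd, mul_one]
end

section
/- Fix integers N ≥ 1 and 1 ≤ q ≤ N. For a fixed 0/1-vector z of length N with exactly q ones, with ones at positions e₁ < … < e_q and zeros at positions n₁ < … < n_{N-q}, the product ∏_{ℓ=1}^{q} (q-ℓ+1)/(N - e_ℓ + 1) · ∏_{ℓ=1}^{N-q} (N - q - ℓ + 1)/(N - n_ℓ + 1) equals 1/C(N, q). -/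
open Finset

lemma prod_desc (n : ℕ) : ∏ ℓ : Fin n, (n - ℓ.val) = n.factorial := by
  rw [Fin.prod_univ_eq_prod_range]
  induction n with
  | zero => simp
  | succ k ih =>
    rw [Finset.prod_range_succ']
    have : (∏ i ∈ Finset.range k, (k + 1 - (i + 1))) = ∏ i ∈ Finset.range k, (k - i) := by
      apply Finset.prod_congr rfl; intro i _; omega
    rw [this, ih, Nat.factorial_succ, Nat.sub_zero, Nat.mul_comm]

lemma prod_Icc_desc (n : ℕ) : ∏ x ∈ Finset.Icc 1 n, (n - x + 1) = n.factorial := by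
  rw [← Finset.prod_Ico_id_eq_factorial, ← Finset.Ico_add_one_right_eq_Icc]
  apply Finset.prod_nbij' (fun x => n + 1 - x) (fun x => n + 1 - x) <;>
    intro a ha <;> simp only [Finset.mem_Ico] at * <;> omega

/-- Product identity for the streaming subset-sampling process. Positions `1,…,N` are split
into the positions `e₁ < … < e_q` of the ones and `n₁ < … < n_{N-q}` of the zeros of a fixed
bit vector with exactly `q` ones. Then
`∏_{ℓ=1}^{q} (q-ℓ+1)/(N-e_ℓ+1) · ∏_{ℓ=1}^{N-q} (N-q-ℓ+1)/(N-n_ℓ+1) = 1 / C(N,q)`. -/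
theorem product_identity (N q : ℕ) (hN : 1 ≤ N) (hq : 1 ≤ q) (hqN : q ≤ N)
    (e : Fin q → ℕ) (nn : Fin (N - q) → ℕ)
    (he : StrictMono e) (hn : StrictMono nn)
    (hrange : Set.range e ∪ Set.range nn = Set.Icc 1 N)
    (hdisj : Disjoint (Set.range e) (Set.range nn)) :
    (∏ ℓ : Fin q, ((q - ℓ.val : ℕ) : ℝ) / ((N - e ℓ + 1 : ℕ) : ℝ)) *
      (∏ ℓ : Fin (N - q), ((N - q - ℓ.val : ℕ) : ℝ) / ((N - nn ℓ + 1 : ℕ) : ℝ))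
      = 1 / (N.choose q : ℝ) := by
  set A := Finset.univ.image e with hA
  set B := Finset.univ.image nn with hB
  have hAcoe : (A : Set ℕ) = Set.range e := by rw [hA]; simp [Set.image_univ]
  have hBcoe : (B : Set ℕ) = Set.range nn := by rw [hB]; simp [Set.image_univ]
  have hAB : A ∪ B = Finset.Icc 1 N := by
    apply Finset.coe_injective
    rw [Finset.coe_union, hAcoe, hBcoe, hrange, Finset.coe_Icc]
  have hABdisj : Disjoint A B := by
    rw [← Finset.disjoint_coe, hAcoe, hBcoe]; exact hdisj
  have hprodA : (∏ ℓ : Fin q, (N - e ℓ + 1)) = ∏ x ∈ A, (N - x + 1) := by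
    rw [hA, Finset.prod_image (fun x _ y _ h => he.injective h)]
  have hprodB : (∏ ℓ : Fin (N - q), (N - nn ℓ + 1)) = ∏ x ∈ B, (N - x + 1) := by
    rw [hB, Finset.prod_image (fun x _ y _ h => hn.injective h)]
  have hD : (∏ ℓ : Fin q, (N - e ℓ + 1)) * (∏ ℓ : Fin (N - q), (N - nn ℓ + 1))
      = N.factorial := by
    rw [hprodA, hprodB, ← Finset.prod_union hABdisj, hAB, prod_Icc_desc]
  have hNf : (N.factorial : ℝ) ≠ 0 := Nat.cast_ne_zero.mpr N.factorial_ne_zero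
  have hch : (N.choose q : ℝ) ≠ 0 := Nat.cast_ne_zero.mpr (Nat.choose_pos hqN).ne'
  rw [Finset.prod_div_distrib, Finset.prod_div_distrib, ← Nat.cast_prod, ← Nat.cast_prod,
    ← Nat.cast_prod, ← Nat.cast_prod, prod_desc q, prod_desc (N - q),
    div_mul_div_comm, ← Nat.cast_mul, ← Nat.cast_mul, hD,
    div_eq_div_iff hNf hch, one_mul, ← Nat.cast_mul]
  norm_cast
  rw [← Nat.choose_mul_factorial_mul_factorial hqN]
  ring
end

section
/- Suppose g: [0,1] → ℝ₊ is measurable with g bounded away from 0, and for all a ∈ [0,1], ∫₀¹ exp(-∫₀^y 1/g(z) dz) · (1/g(y)) · (1 - a^{g(y)}) dy ≥ α(1-a). Then for every distribution function F on ℝ₊ and every n, ∫₀^∞ ∫₀¹ exp(-∫₀^y 1/g(z) dz) · (1/g(y)) · (1 - F(x)^{g(y)·n}) dy dx ≥ α ∫₀^∞ (1 - F(x)^n) dx; conversely, if the pointwise condition fails for some a ∈ [0,1), then the integrated inequality fails for the two-point distribution taking value 0 with probability a^{1/n} and value 1 otherwise. -/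
open Real MeasureTheory intervalIntegral

noncomputable def MRS.Phi (g : ℝ → ℝ) (a : ℝ) : ℝ :=
  ∫ y in (0:ℝ)..1, exp (-(∫ z in (0:ℝ)..y, 1 / g z)) * (1 / g y) * (1 - a ^ (g y))

namespace MRS

variable {g : ℝ → ℝ} {c : ℝ}

theorem gpos (hc : 0 < c) (hgc : ∀ y ∈ Set.Icc (0:ℝ) 1, c ≤ g y) :
    ∀ y ∈ Set.Icc (0:ℝ) 1, 0 < g y := fun y hy => hc.trans_le (hgc y hy)

theorem oneDivg_int (hmeas : Measurable g) (hc : 0 < c)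
    (hgc : ∀ y ∈ Set.Icc (0:ℝ) 1, c ≤ g y) :
    IntegrableOn (fun z => 1 / g z) (Set.Icc (0:ℝ) 1) volume := by
  refine Integrable.mono' (g := fun _ => 1/c)
    ((integrableOn_const_iff (C := 1/c)).2 (Or.inr ?_)) ((measurable_const.div hmeas).aestronglyMeasurable)
    (((ae_restrict_iff' measurableSet_Icc).2 (ae_of_all _ fun y hy => ?_)))
  · simp [Real.volume_Icc]
  · have h1 := gpos hc hgc y hy
    rw [Real.norm_eq_abs, abs_of_nonneg (by positivity)]
    exact one_div_le_one_div_of_le hc (hgc y hy)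

theorem prim_nonneg (hc : 0 < c) (hgc : ∀ y ∈ Set.Icc (0:ℝ) 1, c ≤ g y)
    {y : ℝ} (hy : y ∈ Set.Icc (0:ℝ) 1) : 0 ≤ ∫ z in (0:ℝ)..y, 1 / g z := by
  refine intervalIntegral.integral_nonneg hy.1 fun u hu => ?_
  have := gpos hc hgc u ⟨hu.1, hu.2.trans hy.2⟩
  positivity

theorem E_le_one (hc : 0 < c) (hgc : ∀ y ∈ Set.Icc (0:ℝ) 1, c ≤ g y)
    {y : ℝ} (hy : y ∈ Set.Icc (0:ℝ) 1) :
    exp (-(∫ z in (0:ℝ)..y, 1 / g z)) ≤ 1 := by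
  rw [exp_le_one_iff, neg_nonpos]
  exact prim_nonneg hc hgc hy

theorem integrand_nonneg (hc : 0 < c) (hgc : ∀ y ∈ Set.Icc (0:ℝ) 1, c ≤ g y)
    {a : ℝ} (ha : a ∈ Set.Icc (0:ℝ) 1) {y : ℝ} (hy : y ∈ Set.Icc (0:ℝ) 1) :
    0 ≤ exp (-(∫ z in (0:ℝ)..y, 1 / g z)) * (1 / g y) * (1 - a ^ (g y)) := by
  have h1 := gpos hc hgc y hy
  have h2 : a ^ (g y) ≤ 1 := Real.rpow_le_one ha.1 ha.2 h1.le
  have h3 : (0:ℝ) < exp (-(∫ z in (0:ℝ)..y, 1 / g z)) := exp_pos _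
  nlinarith [mul_pos h3 (one_div_pos.2 h1)]

theorem integrand_le (hc : 0 < c) (hgc : ∀ y ∈ Set.Icc (0:ℝ) 1, c ≤ g y)
    {a : ℝ} (ha : a ∈ Set.Icc (0:ℝ) 1) {y : ℝ} (hy : y ∈ Set.Icc (0:ℝ) 1) :
    exp (-(∫ z in (0:ℝ)..y, 1 / g z)) * (1 / g y) * (1 - a ^ (g y))
      ≤ max 1 (1/c) * (1 - a) := by
  have h1 := gpos hc hgc y hy
  have hE := E_le_one hc hgc hy
  have hE0 : (0:ℝ) < exp (-(∫ z in (0:ℝ)..y, 1 / g z)) := exp_pos _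
  have key : (1 / g y) * (1 - a ^ (g y)) ≤ max 1 (1/c) * (1 - a) := by
    rcases le_or_gt 1 (g y) with hg1 | hg1
    · -- Bernoulli
      have hb : 1 + g y * (a - 1) ≤ a ^ (g y) := by
        have := one_add_mul_self_le_rpow_one_add (s := a - 1) (by linarith [ha.1]) hg1
        simpa using this
      have h4 : (1 / g y) * (1 - a ^ (g y)) ≤ 1 - a := by
        rw [div_mul_eq_mul_div, div_le_iff₀ h1]
        nlinarith
      have : (1:ℝ) - a ≤ max 1 (1/c) * (1 - a) := by
        nlinarith [le_max_left (1:ℝ) (1/c), ha.2]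
      linarith
    · have haa : a ≤ a ^ (g y) := by
        rcases eq_or_lt_of_le ha.1 with h0 | h0
        · rw [← h0]; exact Real.rpow_nonneg le_rfl _
        · calc a = a ^ (1:ℝ) := (Real.rpow_one a).symm
            _ ≤ a ^ (g y) := Real.rpow_le_rpow_of_exponent_ge h0 ha.2 hg1.le
      have h5 : 1 / g y ≤ 1 / c := one_div_le_one_div_of_le hc (hgc y hy)
      have h6 : 1 / c ≤ max 1 (1/c) := le_max_right _ _
      have h7 : (0:ℝ) ≤ 1 - a ^ (g y) :=
        sub_nonneg.2 (Real.rpow_le_one ha.1 ha.2 h1.le)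
      nlinarith [one_div_pos.2 h1]
  calc exp (-(∫ z in (0:ℝ)..y, 1 / g z)) * (1 / g y) * (1 - a ^ (g y))
      ≤ 1 * ((1 / g y) * (1 - a ^ (g y))) := by
        rw [mul_assoc]
        refine mul_le_mul_of_nonneg_right hE ?_
        have h2 : a ^ (g y) ≤ 1 := Real.rpow_le_one ha.1 ha.2 h1.le
        have := one_div_pos.2 h1
        nlinarith
    _ ≤ max 1 (1/c) * (1 - a) := by rw [one_mul]; exact key

theorem Phi_intInt (hmeas : Measurable g) (hc : 0 < c)
    (hgc : ∀ y ∈ Set.Icc (0:ℝ) 1, c ≤ g y) {a : ℝ} (ha : a ∈ Set.Icc (0:ℝ) 1) :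
    IntervalIntegrable
      (fun y => exp (-(∫ z in (0:ℝ)..y, 1 / g z)) * (1 / g y) * (1 - a ^ (g y)))
      volume 0 1 := by
  rw [intervalIntegrable_iff_integrableOn_Ioc_of_le zero_le_one]
  have hP : ContinuousOn (fun y => ∫ z in (0:ℝ)..y, 1 / g z) (Set.Icc (0:ℝ) 1) := by
    have := intervalIntegral.continuousOn_primitive_interval
      (a := (0:ℝ)) (b := 1) (μ := volume) (f := fun z => 1 / g z) ?_
    · rwa [Set.uIcc_of_le zero_le_one] at this
    · rw [Set.uIcc_of_le zero_le_one]; exact oneDivg_int hmeas hc hgc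
  have hPm : AEMeasurable (fun y => ∫ z in (0:ℝ)..y, 1 / g z)
      (volume.restrict (Set.Ioc (0:ℝ) 1)) :=
    ((hP.mono Set.Ioc_subset_Icc_self).aemeasurable measurableSet_Ioc)
  have hpow : Measurable (fun y => a ^ (g y)) := by
    rcases eq_or_lt_of_le ha.1 with h0 | h0
    · have : (fun y => a ^ (g y)) = fun y => if g y = 0 then 1 else 0 := by
        funext y
        rcases eq_or_ne (g y) 0 with h | h
        · simp [h, Real.rpow_zero]
        · simp [h, ← h0, Real.zero_rpow h]
      rw [this]
      exact Measurable.ite (hmeas (measurableSet_singleton 0)) measurable_const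
        measurable_const
    · have : (fun y => a ^ (g y)) = fun y => exp (Real.log a * g y) :=
        funext fun y => Real.rpow_def_of_pos h0 _
      rw [this]
      exact Real.measurable_exp.comp (measurable_const.mul hmeas)
  have hsm : AEStronglyMeasurable
      (fun y => exp (-(∫ z in (0:ℝ)..y, 1 / g z)) * (1 / g y) * (1 - a ^ (g y)))
      (volume.restrict (Set.Ioc (0:ℝ) 1)) := by
    refine AEMeasurable.aestronglyMeasurable ?_
    exact ((Real.measurable_exp.comp_aemeasurable hPm.neg).mul
      ((measurable_const.div hmeas).aemeasurable)).mul
      ((measurable_const.sub hpow).aemeasurable)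
  refine Integrable.mono' (g := fun _ => max 1 (1/c))
    ((integrableOn_const_iff (C := max 1 (1/c))).2 (Or.inr ?_)) hsm
    (((ae_restrict_iff' measurableSet_Ioc).2 (ae_of_all _ fun y hy => ?_)))
  · simp [Real.volume_Ioc]
  · have hy' : y ∈ Set.Icc (0:ℝ) 1 := Set.Ioc_subset_Icc_self hy
    rw [Real.norm_eq_abs, abs_of_nonneg (integrand_nonneg hc hgc ha hy')]
    calc _ ≤ max 1 (1/c) * (1 - a) := integrand_le hc hgc ha hy'
      _ ≤ max 1 (1/c) * 1 := by
          refine mul_le_mul_of_nonneg_left (by linarith [ha.1]) ?_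
          positivity
      _ = max 1 (1/c) := mul_one _

theorem Phi_nonneg (hc : 0 < c) (hgc : ∀ y ∈ Set.Icc (0:ℝ) 1, c ≤ g y)
    {a : ℝ} (ha : a ∈ Set.Icc (0:ℝ) 1) : 0 ≤ Phi g a :=
  intervalIntegral.integral_nonneg zero_le_one fun y hy => integrand_nonneg hc hgc ha hy

theorem Phi_le (hmeas : Measurable g) (hc : 0 < c)
    (hgc : ∀ y ∈ Set.Icc (0:ℝ) 1, c ≤ g y) {a : ℝ} (ha : a ∈ Set.Icc (0:ℝ) 1) :
    Phi g a ≤ max 1 (1/c) * (1 - a) := by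
  have : Phi g a ≤ ∫ _y in (0:ℝ)..1, max 1 (1/c) * (1 - a) := by
    refine intervalIntegral.integral_mono_on zero_le_one (Phi_intInt hmeas hc hgc ha)
      (intervalIntegrable_const) fun y hy => integrand_le hc hgc ha hy
  simpa using this

theorem Phi_anti (hmeas : Measurable g) (hc : 0 < c)
    (hgc : ∀ y ∈ Set.Icc (0:ℝ) 1, c ≤ g y) {a b : ℝ} (ha : a ∈ Set.Icc (0:ℝ) 1)
    (hb : b ∈ Set.Icc (0:ℝ) 1) (hab : a ≤ b) : Phi g b ≤ Phi g a := by
  refine intervalIntegral.integral_mono_on zero_le_one (Phi_intInt hmeas hc hgc hb)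
    (Phi_intInt hmeas hc hgc ha) fun y hy => ?_
  have h1 := gpos hc hgc y hy
  have hr : a ^ (g y) ≤ b ^ (g y) := Real.rpow_le_rpow ha.1 hab h1.le
  have hE : (0:ℝ) ≤ exp (-(∫ z in (0:ℝ)..y, 1 / g z)) * (1 / g y) := by positivity
  nlinarith

theorem Phi_one (g : ℝ → ℝ) : Phi g 1 = 0 := by
  simp [Phi, Real.one_rpow]

end MRS

/-- The pointwise inequality (with `a = F(x)^n`) is sufficient and necessary for the MRS
algorithm defined by `g` to achieve approximation ratio `α`. -/
theorem pointwise_iff_integrated (g : ℝ → ℝ) (α : ℝ)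
    (hmeas : Measurable g) (c : ℝ) (hc : 0 < c) (hgc : ∀ y ∈ Set.Icc (0:ℝ) 1, c ≤ g y) :
    -- sufficiency
    ((∀ a ∈ Set.Icc (0:ℝ) 1,
        (∫ y in (0:ℝ)..1,
            exp (-(∫ z in (0:ℝ)..y, 1 / g z)) * (1 / g y) * (1 - a ^ (g y)))
          ≥ α * (1 - a)) →
      ∀ F : ℝ → ℝ, Monotone F → (∀ x, 0 ≤ F x) → (∀ x, F x ≤ 1) →
        ∀ n : ℕ, 1 ≤ n →
          (∫ x in Set.Ioi (0:ℝ),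
              ∫ y in (0:ℝ)..1,
                exp (-(∫ z in (0:ℝ)..y, 1 / g z)) * (1 / g y)
                  * (1 - (F x) ^ (g y * n)))
            ≥ α * ∫ x in Set.Ioi (0:ℝ), (1 - (F x) ^ (n : ℝ))) ∧
    -- necessity: if the pointwise condition fails at some `a ∈ [0,1)`, the integrated
    -- inequality fails for the two-point distribution with mass `a^{1/n}` at 0 and the
    -- rest at 1.
    (∀ a ∈ Set.Ico (0:ℝ) 1,
      (∫ y in (0:ℝ)..1,
          exp (-(∫ z in (0:ℝ)..y, 1 / g z)) * (1 / g y) * (1 - a ^ (g y)))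
        < α * (1 - a) →
      ∀ n : ℕ, 1 ≤ n →
        ∀ F : ℝ → ℝ, (∀ x, F x = if x < 1 then a ^ ((1:ℝ) / n) else 1) →
          (∫ x in Set.Ioi (0:ℝ),
              ∫ y in (0:ℝ)..1,
                exp (-(∫ z in (0:ℝ)..y, 1 / g z)) * (1 / g y)
                  * (1 - (F x) ^ (g y * n)))
            < α * ∫ x in Set.Ioi (0:ℝ), (1 - (F x) ^ (n : ℝ))) := by
  constructor
  · -- sufficiency
    intro hpt F hFmono hF0 hF1 n hn
    have hrw : ∀ x, (∫ y in (0:ℝ)..1,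
        exp (-(∫ z in (0:ℝ)..y, 1 / g z)) * (1 / g y) * (1 - (F x) ^ (g y * n)))
        = MRS.Phi g (F x ^ (n:ℝ)) := by
      intro x
      refine intervalIntegral.integral_congr fun y hy => ?_
      have h : (F x) ^ (g y * (n:ℝ)) = (F x ^ (n:ℝ)) ^ (g y) := by
        rw [mul_comm]; exact Real.rpow_mul (hF0 x) _ _
      simp only [h]
    have hmem : ∀ x, F x ^ (n:ℝ) ∈ Set.Icc (0:ℝ) 1 := fun x =>
      ⟨Real.rpow_nonneg (hF0 x) _, Real.rpow_le_one (hF0 x) (hF1 x) (Nat.cast_nonneg n)⟩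
    simp only [hrw]
    by_cases hsint : IntegrableOn (fun x => 1 - F x ^ (n:ℝ)) (Set.Ioi 0) volume
    · have hanti : Antitone (fun x => MRS.Phi g (F x ^ (n:ℝ))) := by
        intro x x' hxx'
        exact MRS.Phi_anti hmeas hc hgc (hmem x) (hmem x')
          (Real.rpow_le_rpow (hF0 x) (hFmono hxx') (Nat.cast_nonneg n))
      have hintb : IntegrableOn (fun x => MRS.Phi g (F x ^ (n:ℝ))) (Set.Ioi 0) volume := by
        refine Integrable.mono' (hsint.const_mul (max 1 (1/c)))
          hanti.measurable.aestronglyMeasurable (ae_of_all _ fun x => ?_)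
        rw [Real.norm_eq_abs, abs_of_nonneg (MRS.Phi_nonneg hc hgc (hmem x))]
        exact MRS.Phi_le hmeas hc hgc (hmem x)
      rw [ge_iff_le, ← MeasureTheory.integral_const_mul]
      exact setIntegral_mono_on (hsint.const_mul α) hintb measurableSet_Ioi
        fun x _ => hpt _ (hmem x)
    · rw [ge_iff_le, MeasureTheory.integral_undef hsint, mul_zero]
      exact setIntegral_nonneg measurableSet_Ioi fun x _ => MRS.Phi_nonneg hc hgc (hmem x)
  · -- necessity
    intro a ha hlt n hn F hF
    have hn0 : (n:ℝ) ≠ 0 := Nat.cast_ne_zero.2 (by omega)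
    have ha1 : a ∈ Set.Icc (0:ℝ) 1 := ⟨ha.1, ha.2.le⟩
    have hF0 : ∀ x, 0 ≤ F x := by
      intro x; rw [hF x]; split
      · exact Real.rpow_nonneg ha.1 _
      · exact zero_le_one
    have hFn : ∀ x, F x ^ (n:ℝ) = if x < 1 then a else 1 := by
      intro x; rw [hF x]; split
      · rw [← Real.rpow_mul ha.1, one_div_mul_cancel hn0, Real.rpow_one]
      · exact Real.one_rpow _
    have hrw : ∀ x, (∫ y in (0:ℝ)..1,
        exp (-(∫ z in (0:ℝ)..y, 1 / g z)) * (1 / g y) * (1 - (F x) ^ (g y * n)))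
        = MRS.Phi g (F x ^ (n:ℝ)) := by
      intro x
      refine intervalIntegral.integral_congr fun y hy => ?_
      have h : (F x) ^ (g y * (n:ℝ)) = (F x ^ (n:ℝ)) ^ (g y) := by
        rw [mul_comm]; exact Real.rpow_mul (hF0 x) _ _
      simp only [h]
    simp only [hrw, hFn]
    have hlt' : MRS.Phi g a < α * (1 - a) := hlt
    have e1 : (∫ x in Set.Ioi (0:ℝ), MRS.Phi g (if x < 1 then a else 1)) = MRS.Phi g a := by
      calc (∫ x in Set.Ioi (0:ℝ), MRS.Phi g (if x < 1 then a else 1))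
          = ∫ x in Set.Ioi (0:ℝ), Set.indicator (Set.Iio 1) (fun _ => MRS.Phi g a) x := by
            refine MeasureTheory.integral_congr_ae (ae_of_all _ fun x => ?_)
            by_cases h : x < 1 <;>
              simp [Set.indicator_apply, Set.mem_Iio, h, MRS.Phi_one]
        _ = ∫ _x in Set.Ioi (0:ℝ) ∩ Set.Iio 1, MRS.Phi g a :=
            MeasureTheory.setIntegral_indicator measurableSet_Iio
        _ = MRS.Phi g a := by
            rw [Set.Ioi_inter_Iio, setIntegral_const]
            simp [Real.volume_Ioo]
    have e2 : (∫ x in Set.Ioi (0:ℝ), (1 - if x < 1 then a else 1)) = 1 - a := by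
      calc (∫ x in Set.Ioi (0:ℝ), (1 - if x < 1 then a else 1))
          = ∫ x in Set.Ioi (0:ℝ), Set.indicator (Set.Iio 1) (fun _ => 1 - a) x := by
            refine MeasureTheory.integral_congr_ae (ae_of_all _ fun x => ?_)
            by_cases h : x < 1 <;>
              simp [Set.indicator_apply, Set.mem_Iio, h]
        _ = ∫ _x in Set.Ioi (0:ℝ) ∩ Set.Iio 1, (1 - a) :=
            MeasureTheory.setIntegral_indicator measurableSet_Iio
        _ = 1 - a := by
            rw [Set.Ioi_inter_Iio, setIntegral_const]
            simp [Real.volume_Ioo]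
    rw [e1, e2]
    exact hlt'
end

section
/- Let A be a finite set, B a compact metric space, and g: A × B → ℝ such that b ↦ g(a,b) is continuous for each a ∈ A. Extend g bilinearly to probability measures. Then max over mixed strategies x ∈ P(A) of min over b ∈ B of g(x,b) equals min over y ∈ P(B) of max over a ∈ A of g(a,y); moreover if this value is negative, there is a finitely supported y ∈ P(B) with max_{a∈A} g(a,y) ≤ 0. -/
open MeasureTheory

/-- Decomposition of a point of the convex hull of the payoff image as a finitely
supported convex combination. -/
lemma minimax_exists_decomp {A B : Type*} [Fintype A] [Nonempty B] (g : A → B → ℝ)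
    {z : A → ℝ} (hz : z ∈ convexHull ℝ (Set.range fun b a => g a b)) :
    ∃ (s : Finset B) (w : B → ℝ), (∀ b, 0 ≤ w b) ∧ (∑ b ∈ s, w b) = 1 ∧
      ∀ a, (∑ b ∈ s, w b * g a b) = z a := by
  classical
  rw [convexHull_eq] at hz
  obtain ⟨ι, t, w, ζ, hw0, hw1, hζ, hcm⟩ := hz
  set β : ι → B := fun i =>
    if h : ∃ b, (fun a => g a b) = ζ i then h.choose else Classical.arbitrary B with hβdef
  have hβ : ∀ i ∈ t, (fun a => g a (β i)) = ζ i := by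
    intro i hi
    obtain ⟨b, hb⟩ := hζ i hi
    have h : ∃ b, (fun a => g a b) = ζ i := ⟨b, hb⟩
    simp only [hβdef, dif_pos h]
    exact h.choose_spec
  refine ⟨t.image β, fun b => ∑ i ∈ t.filter (fun i => β i = b), w i, ?_, ?_, ?_⟩
  · intro b
    exact Finset.sum_nonneg fun i hi => hw0 i (Finset.mem_of_mem_filter i hi)
  · rw [Finset.sum_fiberwise_of_maps_to (fun i hi => Finset.mem_image_of_mem β hi) w, hw1]
  · intro a
    have key : ∀ b ∈ t.image β,
        (∑ i ∈ t.filter (fun i => β i = b), w i) * g a b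
          = ∑ i ∈ t.filter (fun i => β i = b), w i * ζ i a := by
      intro b _
      rw [Finset.sum_mul]
      refine Finset.sum_congr rfl fun i hi => ?_
      obtain ⟨hit, hib⟩ := Finset.mem_filter.mp hi
      rw [← hib, ← hβ i hit]
    rw [Finset.sum_congr rfl key,
      Finset.sum_fiberwise_of_maps_to (fun i hi => Finset.mem_image_of_mem β hi)
        (fun i => w i * ζ i a)]
    have := Finset.centerMass_eq_of_sum_1 t ζ hw1
    rw [hcm] at this
    rw [this, Finset.sum_apply]
    simp [smul_eq_mul]

/-- Minimax theorem for a finite set `A` of pure strategies against a compact metric space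
`B`, with payoff `g` continuous in the second argument: the max-min over mixed strategies
on `A` equals the min-max over mixed strategies on `B`; moreover, if this value is negative
there is a finitely supported mixed strategy `y` on `B` with `max_{a} g(a, y) ≤ 0`. -/
theorem minimax_finite_compact
    {A : Type*} [Fintype A] [Nonempty A]
    {B : Type*} [MetricSpace B] [CompactSpace B] [Nonempty B]
    [MeasurableSpace B] [BorelSpace B]
    (g : A → B → ℝ) (hg : ∀ a, Continuous (g a)) :
    (⨆ x : {x : A → ℝ // (∀ a, 0 ≤ x a) ∧ ∑ a, x a = 1},
        ⨅ b : B, ∑ a, (x : A → ℝ) a * g a b)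
      = (⨅ y : ProbabilityMeasure B, ⨆ a : A, ∫ b, g a b ∂(y : Measure B)) ∧
    ((⨅ y : ProbabilityMeasure B, ⨆ a : A, ∫ b, g a b ∂(y : Measure B)) < 0 →
      ∃ (s : Finset B) (w : B → ℝ), (∀ b, 0 ≤ w b) ∧ (∑ b ∈ s, w b) = 1 ∧
        ∀ a : A, (∑ b ∈ s, w b * g a b) ≤ 0) := by
  classical
  set F : B → (A → ℝ) := fun b a => g a b with hFdef
  have hFc : Continuous F := continuous_pi fun a => hg a
  have hKcomp : IsCompact (Set.range F) := isCompact_range hFc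
  set C : Set (A → ℝ) := closure (convexHull ℝ (Set.range F)) with hCdef
  have hCconv : Convex ℝ C := (convex_convexHull ℝ _).closure
  have hCclosed : IsClosed C := isClosed_closure
  have hCcomp : IsCompact C :=
    Metric.isCompact_of_isClosed_isBounded hCclosed
      ((isBounded_convexHull.mpr hKcomp.isBounded).closure)
  have hFC : ∀ b, F b ∈ C := fun b =>
    subset_closure (subset_convexHull ℝ _ (Set.mem_range_self b))
  have hCne : C.Nonempty := ⟨F (Classical.arbitrary B), hFC _⟩
  have hne : (Finset.univ : Finset A).Nonempty := Finset.univ_nonempty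
  set φ : (A → ℝ) → ℝ := fun z => Finset.univ.sup' hne (fun a => z a) with hφdef
  have hφc : Continuous φ :=
    Continuous.finset_sup'_apply hne fun a _ => continuous_apply a
  have hsup_eq : ∀ h : A → ℝ, (⨆ a, h a) = Finset.univ.sup' hne h := fun h =>
    le_antisymm (ciSup_le fun a => Finset.le_sup' h (Finset.mem_univ a))
      (Finset.sup'_le _ _ fun a _ => le_ciSup (Set.finite_range h).bddAbove a)
  haveI : Nonempty (ProbabilityMeasure B) :=
    ⟨⟨Measure.dirac (Classical.arbitrary B), inferInstance⟩⟩
  obtain ⟨zs, hzsC, hzsmin⟩ := hCcomp.exists_isMinOn hCne hφc.continuousOn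
  set v : ℝ := φ zs with hvdef
  have hmin : ∀ z ∈ C, v ≤ φ z := fun z hz => hzsmin hz
  -- approximation of the minimizer by points of the convex hull
  have happrox : ∀ ε > (0 : ℝ), ∃ z ∈ convexHull ℝ (Set.range F), ∀ a, z a < v + ε := by
    intro ε hε
    have hzs' := hzsC
    rw [hCdef, Metric.mem_closure_iff] at hzs'
    obtain ⟨z, hz, hdist⟩ := hzs' ε hε
    refine ⟨z, hz, fun a => ?_⟩
    have h1 : dist (zs a) (z a) ≤ dist zs z := dist_le_pi_dist zs z a
    have h2 : zs a ≤ v := Finset.le_sup' _ (Finset.mem_univ a)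
    have h3 : |z a - zs a| < ε := by
      rw [abs_sub_comm, ← Real.dist_eq]
      exact lt_of_le_of_lt h1 hdist
    have := (abs_lt.mp h3).2
    linarith
  -- integrability
  have hInt : ∀ (a : A) (μ : Measure B), IsFiniteMeasure μ → Integrable (g a) μ := by
    intro a μ hμ
    exact integrableOn_univ.mp ((hg a).continuousOn.integrableOn_compact isCompact_univ)
  have hIntF : ∀ (μ : Measure B), IsFiniteMeasure μ → Integrable F μ := by
    intro μ hμ
    exact integrableOn_univ.mp (hFc.continuousOn.integrableOn_compact isCompact_univ)
  -- every mixed strategy on B yields a point of C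
  have hy_mem : ∀ y : ProbabilityMeasure B,
      (fun a => ∫ b, g a b ∂(y : Measure B)) ∈ C := by
    intro y
    have h1 : (∫ b, F b ∂(y : Measure B)) ∈ C :=
      hCconv.integral_mem hCclosed (Filter.Eventually.of_forall fun b => hFC b)
        (hIntF _ inferInstance)
    have h2 : (fun a => ∫ b, g a b ∂(y : Measure B)) = ∫ b, F b ∂(y : Measure B) := by
      funext a
      have := (ContinuousLinearMap.proj a : (A → ℝ) →L[ℝ] ℝ).integral_comp_comm
        (hIntF (y : Measure B) inferInstance)
      simpa [hFdef] using this
    rw [h2]; exact h1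
  have hIlb : ∀ y : ProbabilityMeasure B,
      v ≤ ⨆ a, ∫ b, g a b ∂(y : Measure B) := by
    intro y
    rw [hsup_eq]
    exact hmin _ (hy_mem y)
  -- upper bound on every maxmin term
  have hterm : ∀ x : A → ℝ, (∀ a, 0 ≤ x a) → (∑ a, x a = 1) →
      (⨅ b, ∑ a, x a * g a b) ≤ v := by
    intro x hx0 hx1
    set h : B → ℝ := fun b => ∑ a, x a * g a b with hhdef
    have hhc : Continuous h := continuous_finset_sum _ fun a _ => (continuous_const.mul (hg a))
    obtain ⟨b0, -, hb0⟩ := isCompact_univ.exists_isMinOn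
      ⟨Classical.arbitrary B, Set.mem_univ _⟩ hhc.continuousOn
    have hbdd : BddBelow (Set.range h) := by
      refine ⟨h b0, ?_⟩
      rintro r ⟨b, rfl⟩
      exact hb0 (Set.mem_univ b)
    refine le_of_forall_pos_le_add fun ε hε => ?_
    obtain ⟨z, hz, hzlt⟩ := happrox ε hε
    obtain ⟨s, w, hw0, hw1, hws⟩ := minimax_exists_decomp g hz
    have step1 : (⨅ b, h b) ≤ ∑ b ∈ s, w b * h b := by
      calc (⨅ b, h b) = ∑ b ∈ s, w b * (⨅ b, h b) := by
            rw [← Finset.sum_mul, hw1, one_mul]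
        _ ≤ ∑ b ∈ s, w b * h b :=
            Finset.sum_le_sum fun b _ =>
              mul_le_mul_of_nonneg_left (ciInf_le hbdd b) (hw0 b)
    have step2 : ∑ b ∈ s, w b * h b = ∑ a, x a * z a := by
      simp only [hhdef, Finset.mul_sum]
      rw [Finset.sum_comm]
      refine Finset.sum_congr rfl fun a _ => ?_
      rw [← hws a, Finset.mul_sum]
      exact Finset.sum_congr rfl fun b _ => by ring
    have step3 : ∑ a, x a * z a ≤ v + ε := by
      calc ∑ a, x a * z a ≤ ∑ a, x a * (v + ε) :=
            Finset.sum_le_sum fun a _ =>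
              mul_le_mul_of_nonneg_left (le_of_lt (hzlt a)) (hx0 a)
        _ = v + ε := by rw [← Finset.sum_mul, hx1, one_mul]
    linarith
  -- I = v
  have hvI : v ≤ ⨅ y : ProbabilityMeasure B, ⨆ a, ∫ b, g a b ∂(y : Measure B) :=
    le_ciInf hIlb
  have hIv : (⨅ y : ProbabilityMeasure B, ⨆ a, ∫ b, g a b ∂(y : Measure B)) ≤ v := by
    refine le_of_forall_pos_le_add fun ε hε => ?_
    obtain ⟨z, hz, hzlt⟩ := happrox ε hε
    obtain ⟨s, w, hw0, hw1, hws⟩ := minimax_exists_decomp g hz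
    set μ : Measure B := ∑ b ∈ s, ENNReal.ofReal (w b) • Measure.dirac b with hμdef
    have hP : IsProbabilityMeasure μ := by
      constructor
      rw [hμdef]
      simp only [Measure.coe_finset_sum, Finset.sum_apply, Measure.smul_apply,
        measure_univ, smul_eq_mul, mul_one]
      rw [← ENNReal.ofReal_sum_of_nonneg fun b _ => hw0 b, hw1, ENNReal.ofReal_one]
    have hint : ∀ a, ∫ b, g a b ∂μ = z a := by
      intro a
      rw [hμdef, integral_finset_sum_measure ?_]
      · have : ∀ b ∈ s, ∫ x, g a x ∂(ENNReal.ofReal (w b) • Measure.dirac b)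
            = w b * g a b := by
          intro b _
          rw [integral_smul_measure, integral_dirac, ENNReal.toReal_ofReal (hw0 b),
            smul_eq_mul]
        rw [Finset.sum_congr rfl this, hws a]
      · intro b _
        exact (hInt a (Measure.dirac b) inferInstance).smul_measure ENNReal.ofReal_ne_top
    have hbdd : BddBelow (Set.range fun y : ProbabilityMeasure B =>
        ⨆ a, ∫ b, g a b ∂(y : Measure B)) := by
      refine ⟨v, ?_⟩
      rintro r ⟨y, rfl⟩
      exact hIlb y
    have : (⨅ y : ProbabilityMeasure B, ⨆ a, ∫ b, g a b ∂(y : Measure B))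
        ≤ ⨆ a, ∫ b, g a b ∂((⟨μ, hP⟩ : ProbabilityMeasure B) : Measure B) :=
      ciInf_le hbdd ⟨μ, hP⟩
    refine le_trans this ?_
    have : (⨆ a, ∫ b, g a b ∂((⟨μ, hP⟩ : ProbabilityMeasure B) : Measure B))
        = ⨆ a, z a := by
      congr 1
      funext a
      exact hint a
    rw [this, hsup_eq]
    exact Finset.sup'_le _ _ fun a _ => le_of_lt (hzlt a)
  have hIeq : (⨅ y : ProbabilityMeasure B, ⨆ a, ∫ b, g a b ∂(y : Measure B)) = v :=
    le_antisymm hIv hvI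
  -- separation: a mixed strategy on A guaranteeing v
  obtain ⟨x', hx'0, hx'1, hx'v⟩ :
      ∃ x' : A → ℝ, (∀ a, 0 ≤ x' a) ∧ (∑ a, x' a = 1) ∧ ∀ z ∈ C, v ≤ ∑ a, x' a * z a := by
    set D : Set (A → ℝ) := Set.univ.pi fun _ => Set.Iio v with hDdef
    have hDconv : Convex ℝ D := convex_pi fun i _ => convex_Iio v
    have hDopen : IsOpen D := isOpen_set_pi Set.finite_univ fun a _ => isOpen_Iio
    have hDmem : ∀ z : A → ℝ, (∀ a, z a < v) → z ∈ D := by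
      intro z hz a _; exact hz a
    have hdisj : Disjoint D C := by
      rw [Set.disjoint_left]
      intro z hzD hzC
      have h1 : v ≤ φ z := hmin z hzC
      obtain ⟨a, -, ha⟩ := Finset.exists_mem_eq_sup' hne (fun a => z a)
      have h2 : z a < v := hzD a (Set.mem_univ a)
      rw [hφdef] at h1
      simp only at h1 ha
      rw [ha] at h1
      linarith
    obtain ⟨f, u, hfD, hfC⟩ := geometric_hahn_banach_open hDconv hDopen hCconv hdisj
    set x : A → ℝ := fun a => f (Pi.single a 1) with hxdef
    have hf_eq : ∀ z : A → ℝ, f z = ∑ a, z a * x a := by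
      intro z
      conv_lhs => rw [← Finset.univ_sum_single z]
      rw [map_sum]
      refine Finset.sum_congr rfl fun a _ => ?_
      have hsingle : Pi.single a (z a) = z a • (Pi.single a 1 : A → ℝ) := by
        funext j
        by_cases hj : j = a <;> simp [Pi.single_apply, hj]
      rw [hsingle, f.map_smul, smul_eq_mul, hxdef]
    set d0 : A → ℝ := fun _ => v - 1 with hd0def
    have hd0D : d0 ∈ D := hDmem d0 fun a => by simp only [hd0def]; linarith
    have hfd0 : f d0 < u := hfD d0 hd0D
    have hx0 : ∀ a, 0 ≤ x a := by
      intro a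
      by_contra hcon
      push_neg at hcon
      set t : ℝ := (f d0 - u) / x a with htdef
      have ht : 0 < t := div_pos_of_neg_of_neg (by linarith) hcon
      have hdD : (d0 - t • (Pi.single a 1 : A → ℝ)) ∈ D := by
        refine hDmem _ fun c => ?_
        by_cases hc : c = a
        · subst hc
          simp only [Pi.sub_apply, Pi.smul_apply, Pi.single_eq_same, smul_eq_mul, mul_one,
            hd0def]
          linarith
        · simp only [Pi.sub_apply, Pi.smul_apply, Pi.single_apply, if_neg hc, smul_eq_mul,
            mul_zero, sub_zero, hd0def]
          linarith
      have h2 : f (d0 - t • (Pi.single a 1 : A → ℝ)) < u := hfD _ hdD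
      rw [map_sub, f.map_smul, smul_eq_mul] at h2
      have h3 : t * x a = f d0 - u := div_mul_cancel₀ _ (ne_of_lt hcon)
      have : f (Pi.single a 1) = x a := rfl
      rw [this] at h2
      linarith
    set T : ℝ := ∑ a, x a with hTdef
    have hT0 : 0 ≤ T := Finset.sum_nonneg fun a _ => hx0 a
    have hTpos : 0 < T := by
      rcases lt_or_eq_of_le hT0 with h | h
      · exact h
      · exfalso
        have hall : ∀ a ∈ Finset.univ, x a = 0 :=
          (Finset.sum_eq_zero_iff_of_nonneg fun a _ => hx0 a).mp h.symm
        have hf0 : ∀ z : A → ℝ, f z = 0 := by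
          intro z
          rw [hf_eq]
          exact Finset.sum_eq_zero fun a _ => by rw [hall a (Finset.mem_univ a), mul_zero]
        have h1 : (0 : ℝ) < u := by have := hfD d0 hd0D; rwa [hf0] at this
        have h2 : u ≤ 0 := by have := hfC zs hzsC; rwa [hf0] at this
        linarith
    have hvTu : v * T ≤ u := by
      have key : ∀ ε > (0 : ℝ), (v - ε) * T < u := by
        intro ε hε
        have hd : (fun _ => v - ε : A → ℝ) ∈ D := hDmem _ fun a => by linarith
        have := hfD _ hd
        rw [hf_eq] at this
        calc (v - ε) * T = ∑ a, (v - ε) * x a := by rw [hTdef, Finset.mul_sum]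
          _ < u := by
            refine lt_of_eq_of_lt ?_ this
            exact Finset.sum_congr rfl fun a _ => by ring
      refine le_of_forall_pos_le_add fun ε hε => ?_
      have := key (ε / T) (div_pos hε hTpos)
      have heq : (v - ε / T) * T = v * T - ε := by
        field_simp
      linarith [heq ▸ this]
    refine ⟨fun a => x a / T, fun a => div_nonneg (hx0 a) hT0, ?_, ?_⟩
    · rw [← Finset.sum_div, ← hTdef, div_self (ne_of_gt hTpos)]
    · intro z hz
      have h1 : u ≤ f z := hfC z hz
      rw [hf_eq] at h1
      have h2 : ∑ a, x a / T * z a = (∑ a, z a * x a) / T := by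
        rw [Finset.sum_div]
        exact Finset.sum_congr rfl fun a _ => by ring
      rw [h2]
      rw [le_div_iff₀ hTpos]
      calc v * T ≤ u := hvTu
        _ ≤ ∑ a, z a * x a := h1
  -- value of x' against any b
  have hx'inf : v ≤ ⨅ b, ∑ a, x' a * g a b := by
    refine le_ciInf fun b => ?_
    exact hx'v (F b) (hFC b)
  -- the sup side
  have hSbdd : BddAbove (Set.range fun x : {x : A → ℝ // (∀ a, 0 ≤ x a) ∧ ∑ a, x a = 1} =>
      ⨅ b : B, ∑ a, (x : A → ℝ) a * g a b) := by
    refine ⟨v, ?_⟩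
    rintro r ⟨x, rfl⟩
    exact hterm x x.2.1 x.2.2
  have hSub : Nonempty {x : A → ℝ // (∀ a, 0 ≤ x a) ∧ ∑ a, x a = 1} := ⟨⟨x', hx'0, hx'1⟩⟩
  have hSle : (⨆ x : {x : A → ℝ // (∀ a, 0 ≤ x a) ∧ ∑ a, x a = 1},
      ⨅ b : B, ∑ a, (x : A → ℝ) a * g a b) ≤ v :=
    ciSup_le fun x => hterm x x.2.1 x.2.2
  have hSge : v ≤ (⨆ x : {x : A → ℝ // (∀ a, 0 ≤ x a) ∧ ∑ a, x a = 1},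
      ⨅ b : B, ∑ a, (x : A → ℝ) a * g a b) :=
    le_ciSup_of_le hSbdd ⟨x', hx'0, hx'1⟩ hx'inf
  constructor
  · rw [hIeq]
    exact le_antisymm hSle hSge
  · intro hI
    rw [hIeq] at hI
    obtain ⟨z, hz, hzlt⟩ := happrox (-v) (by linarith)
    obtain ⟨s, w, hw0, hw1, hws⟩ := minimax_exists_decomp g hz
    refine ⟨s, w, hw0, hw1, fun a => ?_⟩
    rw [hws a]
    have := hzlt a
    linarith
end
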